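/- Let k ≥ 1, let G be a graph and F ⊆ E^G, and let G̃ be the graph obtained from G by subdividing every edge (k−1) times (replacing every edge by a path of length k), with F̃ the set of edges of G̃ appearing in the subdivision of an edge of F. If G̃ has a k-good drawing with respect to F̃, then G̃ has a k-good drawing with respect to F̃ in which, additionally, every edge is involved in at most one crossing. -/

import Mathlib

lemma sym2_out_eq {α : Type} (s : Sym2 α) : s = s((Quot.out s).1, (Quot.out s).2) := by
  exact (Quot.out_eq s).symm

lemma sym2_out_fst_mem {α : Type} (s : Sym2 α) : (Quot.out s).1 ∈ s := by
  set p := Quot.out s with hp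
  rw [sym2_out_eq s, ← hp]
  exact Sym2.mem_mk_left _ _

lemma sym2_out_snd_mem {α : Type} (s : Sym2 α) : (Quot.out s).2 ∈ s := by
  set p := Quot.out s with hp
  rw [sym2_out_eq s, ← hp]
  exact Sym2.mem_mk_right _ _

lemma sym2_out_ne {α : Type} (s : Sym2 α) (h : ¬ s.IsDiag) : (Quot.out s).1 ≠ (Quot.out s).2 := by
  intro he
  exact h (by rw [sym2_out_eq s]; exact Sym2.mk_isDiag_iff.mpr he)

/-! ### Basic multigraphs -/

/-- A multigraph: undirected, loop-free, possibly with multiple (parallel) edges.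
Each edge is assigned its unordered pair of (distinct) endpoints. -/
structure MGraph where
  V : Type
  E : Type
  ends : E → Sym2 V
  loopless : ∀ e : E, ¬ (ends e).IsDiag

namespace MGraph

/-- Walks in a multigraph. -/
inductive Walk (G : MGraph) : G.V → G.V → Type where
  | nil (v : G.V) : Walk G v v
  | cons {u v w : G.V} (e : G.E) (he : G.ends e = s(u, v)) (p : Walk G v w) : Walk G u w

namespace Walk

variable {G : MGraph}

/-- The list of vertices visited by a walk (in order, including both endpoints). -/
def support : ∀ {u v : G.V}, G.Walk u v → List G.V
  | u, _, .nil _ => [u]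
  | u, _, .cons _ _ p => u :: p.support

/-- The list of edges traversed by a walk. -/
def edgeList : ∀ {u v : G.V}, G.Walk u v → List G.E
  | _, _, .nil _ => []
  | _, _, .cons e _ p => e :: p.edgeList

lemma start_mem_support : ∀ {u v : G.V} (w : G.Walk u v), u ∈ w.support
  | _, _, .nil _ => List.mem_singleton_self _
  | _, _, .cons _ _ _ => List.mem_cons_self

lemma end_mem_support : ∀ {u v : G.V} (w : G.Walk u v), v ∈ w.support
  | _, _, .nil _ => List.mem_singleton_self _
  | _, _, .cons _ _ p => List.mem_cons_of_mem _ (end_mem_support p)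

lemma mem_support_of_mem_edgeList :
    ∀ {u v : G.V} (w : G.Walk u v) (f : G.E) (x : G.V),
      f ∈ w.edgeList → x ∈ G.ends f → x ∈ w.support
  | _, _, .nil _, f, x, hf, _ => by simp [edgeList] at hf
  | u, v, .cons e he p, f, x, hf, hx => by
      rcases List.mem_cons.mp hf with h | h
      · subst h
        rw [he, Sym2.mem_iff] at hx
        rcases hx with rfl | rfl
        · exact start_mem_support _
        · exact List.mem_cons_of_mem _ (start_mem_support p)
      · exact List.mem_cons_of_mem _ (mem_support_of_mem_edgeList p f x h hx)

/-- A walk is a path if it visits no vertex twice. -/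
def IsPath {u v : G.V} (w : G.Walk u v) : Prop := w.support.Nodup

/-- A closed walk is a cycle if it is nontrivial, repeats no edge,
and repeats no vertex except the first = last one. -/
def IsCycleW {u : G.V} (w : G.Walk u u) : Prop :=
  w.edgeList ≠ [] ∧ w.edgeList.Nodup ∧ w.support.tail.Nodup

end Walk

/-! ### Subgraphs -/

/-- A subgraph of `G`, given by a set of vertices and a set of edges all of whose
endpoints belong to the vertex set. -/
structure Subgraph (G : MGraph) where
  verts : Set G.V
  edges : Set G.E
  closed : ∀ e ∈ edges, ∀ v ∈ G.ends e, v ∈ verts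

namespace Subgraph

variable {G : MGraph}

/-- The subgraph consisting of all of `G`. -/
def top (G : MGraph) : G.Subgraph where
  verts := Set.univ
  edges := Set.univ
  closed := fun _ _ _ _ => Set.mem_univ _

/-- Union of two subgraphs. -/
def union (A B : G.Subgraph) : G.Subgraph where
  verts := A.verts ∪ B.verts
  edges := A.edges ∪ B.edges
  closed := by
    rintro e (he | he) v hv
    · exact Or.inl (A.closed e he v hv)
    · exact Or.inr (B.closed e he v hv)

/-- Union of a set of subgraphs. -/
def sUnion (𝒮 : Set G.Subgraph) : G.Subgraph where
  verts := ⋃ S ∈ 𝒮, S.verts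
  edges := ⋃ S ∈ 𝒮, S.edges
  closed := by
    intro e he v hv
    simp only [Set.mem_iUnion] at he ⊢
    obtain ⟨S, hS, heS⟩ := he
    exact ⟨S, hS, S.closed e heS v hv⟩

/-- Delete a set of vertices (and all edges touching them) from a subgraph. -/
def delete (S : G.Subgraph) (A : Set G.V) : G.Subgraph where
  verts := S.verts \ A
  edges := {e ∈ S.edges | ∀ v ∈ G.ends e, v ∉ A}
  closed := fun e he v hv => ⟨S.closed e he.1 v hv, he.2 v hv⟩

/-- The subgraph, viewed as a graph in its own right. -/
def toGraph (S : G.Subgraph) : MGraph where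
  V := {v : G.V // v ∈ S.verts}
  E := {e : G.E // e ∈ S.edges}
  ends := fun e => (G.ends e.val).attachWith (fun v hv => S.closed e.val e.2 v hv)
  loopless := by
    intro e he
    have h2 := Sym2.IsDiag.map (f := Subtype.val) he
    rw [Sym2.attachWith_map_subtypeVal] at h2
    exact G.loopless e.val h2

lemma toGraph_ends {S : G.Subgraph} (e : S.toGraph.E) {v w : G.V}
    (hvw : G.ends e.val = s(v, w)) (hv : v ∈ S.verts) (hw : w ∈ S.verts) :
    S.toGraph.ends e = s((⟨v, hv⟩ : {v : G.V // v ∈ S.verts}), ⟨w, hw⟩) := by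
  apply Sym2.map.injective Subtype.val_injective
  show Sym2.map Subtype.val ((G.ends e.val).attachWith _) = _
  rw [Sym2.attachWith_map_subtypeVal, Sym2.map_pair_eq, hvw]

lemma toGraph_mem_ends {S : G.Subgraph} (e : S.toGraph.E) (x : S.toGraph.V) :
    x ∈ S.toGraph.ends e ↔ x.val ∈ G.ends e.val := by
  constructor
  · intro hx
    have h2 : x.val ∈ Sym2.map Subtype.val (S.toGraph.ends e) :=
      Sym2.mem_map.mpr ⟨x, hx, rfl⟩
    rwa [show Sym2.map Subtype.val (S.toGraph.ends e) = G.ends e.val from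
      Sym2.attachWith_map_subtypeVal _] at h2
  · intro hx
    have h2 : x.val ∈ Sym2.map Subtype.val (S.toGraph.ends e) := by
      rwa [show Sym2.map Subtype.val (S.toGraph.ends e) = G.ends e.val from
        Sym2.attachWith_map_subtypeVal _]
    obtain ⟨y, hy, hyx⟩ := Sym2.mem_map.mp h2
    rwa [show y = x from Subtype.ext hyx] at hy

/-- Reachability within a subgraph: a walk of `G` all of whose vertices and
edges belong to the subgraph. -/
def Reach (S : G.Subgraph) (u v : G.V) : Prop :=
  ∃ w : G.Walk u v, (∀ x ∈ w.support, x ∈ S.verts) ∧ ∀ e ∈ w.edgeList, e ∈ S.edges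

/-- A subgraph is connected if it is nonempty and any two of its vertices are
joined by a walk inside it. -/
def Connected (S : G.Subgraph) : Prop :=
  S.verts.Nonempty ∧ ∀ u ∈ S.verts, ∀ v ∈ S.verts, S.Reach u v

end Subgraph

/-- The induced subgraph on a vertex set `A`. -/
def induce (G : MGraph) (A : Set G.V) : G.Subgraph where
  verts := A
  edges := {e | ∀ v ∈ G.ends e, v ∈ A}
  closed := fun _ he v hv => he v hv

/-- `G ∖ A`: delete the vertices in `A`, keeping only edges with no endpoint in `A`. -/
def deleteVerts (G : MGraph) (A : Set G.V) : G.Subgraph :=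
  G.induce Aᶜ

end MGraph
/-! ### Drawings in the plane -/

/-- A drawing of a graph in the plane.  Every vertex is assigned a point and every
edge a simple curve (given by an injective continuous parametrization on `[0,1]`)
joining the images of its endpoints; distinct vertices get distinct points;
distinct edge curves meet in at most one interior point; no curve passes through the
image of a vertex other than its endpoints; and no point which is not the image of a
vertex lies on more than two edge curves. -/
structure Drawing (G : MGraph) where
  vpos : G.V → ℝ × ℝ
  par : G.E → ℝ → ℝ × ℝ
  par_cont : ∀ e, ContinuousOn (par e) (Set.Icc 0 1)
  par_inj : ∀ e, Set.InjOn (par e) (Set.Icc 0 1)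
  ends_match : ∀ e, ∃ v w : G.V, G.ends e = s(v, w) ∧ par e 0 = vpos v ∧ par e 1 = vpos w
  vpos_inj : Function.Injective vpos
  arcs_inter : ∀ e f : G.E, e ≠ f →
    Set.Subsingleton (par e '' Set.Ioo 0 1 ∩ par f '' Set.Ioo 0 1)
  vertex_on_arc : ∀ (e : G.E) (v : G.V), vpos v ∈ par e '' Set.Icc 0 1 → v ∈ G.ends e
  at_most_two : ∀ x : ℝ × ℝ, x ∉ Set.range vpos →
    ∀ e₁ e₂ e₃ : G.E, x ∈ par e₁ '' Set.Icc 0 1 → x ∈ par e₂ '' Set.Icc 0 1 →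
      x ∈ par e₃ '' Set.Icc 0 1 → e₁ = e₂ ∨ e₁ = e₃ ∨ e₂ = e₃

namespace Drawing

variable {G : MGraph}

/-- The curve drawn for the edge `e`. -/
def arc (Δ : Drawing G) (e : G.E) : Set (ℝ × ℝ) := Δ.par e '' Set.Icc 0 1

/-- A crossing of a drawing: a point which is not the image of a vertex and lies on
two distinct edge curves. -/
def IsCrossing (Δ : Drawing G) (x : ℝ × ℝ) : Prop :=
  x ∉ Set.range Δ.vpos ∧ ∃ e f : G.E, e ≠ f ∧ x ∈ Δ.arc e ∧ x ∈ Δ.arc f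

/-- The set of crossings of a drawing. -/
def crossings (Δ : Drawing G) : Set (ℝ × ℝ) := {x | Δ.IsCrossing x}

/-- The drawing has at most `k` crossings. -/
def CrossingsAtMost (Δ : Drawing G) (k : ℕ) : Prop :=
  Δ.crossings.Finite ∧ Δ.crossings.ncard ≤ k

/-- The edge `e` is involved in some crossing of the drawing. -/
def Involved (Δ : Drawing G) (e : G.E) : Prop :=
  ∃ x : ℝ × ℝ, Δ.IsCrossing x ∧ x ∈ Δ.arc e

/-- An `l`-good drawing with respect to a set `F` of forbidden edges:
at most `l` crossings, and no forbidden edge is involved in any crossing. -/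
def IsGood (Δ : Drawing G) (l : ℕ) (F : Set G.E) : Prop :=
  Δ.CrossingsAtMost l ∧ ∀ e ∈ F, ¬ Δ.Involved e

/-- The image of a subgraph under a drawing: all vertex points and edge curves of
the subgraph. -/
def subImage (Δ : Drawing G) (S : G.Subgraph) : Set (ℝ × ℝ) :=
  Δ.vpos '' S.verts ∪ ⋃ e ∈ S.edges, Δ.arc e

/-- The restriction of a drawing to a subgraph. -/
def restrict (Δ : Drawing G) (S : G.Subgraph) : Drawing S.toGraph where
  vpos := fun v => Δ.vpos v.val
  par := fun e => Δ.par e.val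
  par_cont := fun e => Δ.par_cont e.val
  par_inj := fun e => Δ.par_inj e.val
  ends_match := by
    intro e
    obtain ⟨v, w, hvw, h0, h1⟩ := Δ.ends_match e.val
    have hv : v ∈ S.verts := S.closed e.val e.2 v (by rw [hvw]; exact Sym2.mem_mk_left _ _)
    have hw : w ∈ S.verts := S.closed e.val e.2 w (by rw [hvw]; exact Sym2.mem_mk_right _ _)
    exact ⟨⟨v, hv⟩, ⟨w, hw⟩, MGraph.Subgraph.toGraph_ends e hvw hv hw, h0, h1⟩
  vpos_inj := fun v w h => Subtype.ext (Δ.vpos_inj h)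
  arcs_inter := fun e f hef =>
    Δ.arcs_inter e.val f.val (fun h => hef (Subtype.ext h))
  vertex_on_arc := by
    intro e v hv
    exact (MGraph.Subgraph.toGraph_mem_ends e v).mpr (Δ.vertex_on_arc e.val v.val hv)
  at_most_two := by
    intro x hx e₁ e₂ e₃ h₁ h₂ h₃
    by_cases hxr : x ∈ Set.range Δ.vpos
    · obtain ⟨u, hu⟩ := hxr
      have hu1 : u ∈ G.ends e₁.val := Δ.vertex_on_arc e₁.val u (by rw [hu]; exact h₁)
      have huS : u ∈ S.verts := S.closed e₁.val e₁.2 u hu1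
      exact absurd ⟨⟨u, huS⟩, hu⟩ hx
    · rcases Δ.at_most_two x hxr e₁.val e₂.val e₃.val h₁ h₂ h₃ with h | h | h
      · exact Or.inl (Subtype.ext h)
      · exact Or.inr (Or.inl (Subtype.ext h))
      · exact Or.inr (Or.inr (Subtype.ext h))

end Drawing

namespace MGraph

/-- A graph is planar if it has a drawing without crossings. -/
def IsPlanar (G : MGraph) : Prop := ∃ Δ : Drawing G, Δ.crossings = ∅

/-- The crossing number of `G` is at most `k`. -/
def CrossingNumberLE (G : MGraph) (k : ℕ) : Prop :=
  ∃ Δ : Drawing G, Δ.CrossingsAtMost k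

end MGraph

/-- A simple closed curve in the plane: a continuous injective image of a circle. -/
def IsSimpleClosedCurve (s : Set (ℝ × ℝ)) : Prop :=
  ∃ f : AddCircle (1 : ℝ) → ℝ × ℝ, Continuous f ∧ Function.Injective f ∧ Set.range f = s
/-! ### H-components -/

namespace MGraph

variable {G : MGraph}

/-- The subgraph consisting of a single edge together with its endpoints. -/
def edgeComp (G : MGraph) (e : G.E) : G.Subgraph where
  verts := {v | v ∈ G.ends e}
  edges := {e}
  closed := by
    rintro f rfl v hv
    exact hv

/-- For a subgraph `H` of `G` and a vertex `u ∉ H`, the `H`-component of `G`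
determined by `u`: the connected component of `G ∖ H` containing `u`, together with
all edges joining it to `H` and their endpoints in `H`. -/
def attachComp (G : MGraph) (H : G.Subgraph) (u : G.V) : G.Subgraph where
  verts := {v | (G.deleteVerts H.verts).Reach u v} ∪
    {v | v ∈ H.verts ∧ ∃ (e : G.E) (w : G.V), G.ends e = s(w, v) ∧
      (G.deleteVerts H.verts).Reach u w}
  edges := {e | e ∈ (G.deleteVerts H.verts).edges ∧
      ∀ v ∈ G.ends e, (G.deleteVerts H.verts).Reach u v} ∪
    {e | ∃ (w v : G.V), G.ends e = s(w, v) ∧ (G.deleteVerts H.verts).Reach u w ∧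
      v ∈ H.verts}
  closed := by
    rintro e (⟨-, he⟩ | ⟨w, v, hwv, hw, hv⟩) x hx
    · exact Or.inl (he x hx)
    · rw [hwv, Sym2.mem_iff] at hx
      rcases hx with rfl | rfl
      · exact Or.inl hw
      · exact Or.inr ⟨hv, e, w, hwv, hw⟩

/-- `C` is an `H`-component of `G`: either a connected component of `G ∖ H` together
with the edges joining it to `H` and their endpoints in `H`, or a single edge of
`G` outside `H` with both endpoints in `H`, together with its endpoints. -/
def IsHComp (G : MGraph) (H C : G.Subgraph) : Prop :=
  (∃ u : G.V, u ∉ H.verts ∧ C = G.attachComp H u) ∨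
  (∃ e : G.E, e ∉ H.edges ∧ (∀ v ∈ G.ends e, v ∈ H.verts) ∧ C = G.edgeComp e)

/-! ### Graph embeddings (subgraph copies) -/

/-- An embedding of the graph `H` into the graph `G`: injective maps on vertices and
edges that respect endpoints.  The image is a subgraph of `G` isomorphic to `H`. -/
structure Emb (H G : MGraph) where
  vmap : H.V → G.V
  emap : H.E → G.E
  vmap_inj : Function.Injective vmap
  emap_inj : Function.Injective emap
  ends_map : ∀ e : H.E, G.ends (emap e) = (H.ends e).map vmap

end MGraph

/-! ### Topological embeddings -/

/-- A topological embedding of `H` into `G`: an injective map on vertices together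
with, for every edge `e` of `H`, a path in `G` (recorded by its vertex set
`pVerts e` and edge set `pEdges e`) joining the images of the endpoints of `e` and
avoiding the images of all other vertices, such that the paths of distinct edges are
internally disjoint. -/
structure TopEmb (H G : MGraph) where
  vmap : H.V → G.V
  vmap_inj : Function.Injective vmap
  pVerts : H.E → Set G.V
  pEdges : H.E → Set G.E
  is_path : ∀ e : H.E, ∃ (a b : H.V) (w : G.Walk (vmap a) (vmap b)),
    H.ends e = s(a, b) ∧ w.IsPath ∧
    pVerts e = {x | x ∈ w.support} ∧ pEdges e = {f | f ∈ w.edgeList} ∧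
    ∀ u : H.V, u ∉ H.ends e → vmap u ∉ w.support
  int_disjoint : ∀ e f : H.E, e ≠ f → ∀ x ∈ pVerts e ∩ pVerts f,
    ∃ a : H.V, a ∈ H.ends e ∧ a ∈ H.ends f ∧ x = vmap a
  edge_disjoint : ∀ e f : H.E, e ≠ f → pEdges e ∩ pEdges f = ∅

namespace TopEmb

variable {H G : MGraph}

/-- The image `h(S)` of a subgraph `S ⊆ H` under a topological embedding `h`. -/
def imageOf (h : TopEmb H G) (S : H.Subgraph) : G.Subgraph where
  verts := (h.vmap '' S.verts) ∪ ⋃ e ∈ S.edges, h.pVerts e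
  edges := ⋃ e ∈ S.edges, h.pEdges e
  closed := by
    intro f hf v hv
    simp only [Set.mem_iUnion] at hf
    obtain ⟨e, he, hfe⟩ := hf
    obtain ⟨a, b, w, -, -, hV, hE, -⟩ := h.is_path e
    right
    simp only [Set.mem_iUnion]
    refine ⟨e, he, ?_⟩
    rw [hV]
    rw [hE] at hfe
    exact MGraph.Walk.mem_support_of_mem_edgeList w f v hfe hv

/-- The image `h(H)` of a topological embedding. -/
def image (h : TopEmb H G) : G.Subgraph := h.imageOf (MGraph.Subgraph.top H)

end TopEmb
/-! ### Hexagonal grids -/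

/-- The vertex type of the hexagonal grid of radius `r`: the vertices are arranged on
`r` concentric principal cycles, the `i`-th of which (counting from the inside,
starting at `i = 0`) has `6 * (2 * i + 1)` vertices. -/
abbrev HexV (r : ℕ) : Type := (i : Fin r) × ZMod (6 * (2 * i.val + 1))

/-- The endpoint on the `i`-th principal cycle of the `k`-th spoke joining the `i`-th
and the `(i+1)`-st principal cycle. -/
def spokeOutV (r : ℕ) (i : Fin (r - 1)) (k : ℕ) : HexV r :=
  ⟨⟨i.val, by have := i.isLt; omega⟩,
    ((k / (i.val + 1)) * (2 * i.val + 1) + 2 * (k % (i.val + 1)) : ℕ)⟩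

/-- The endpoint on the `(i+1)`-st principal cycle of the `k`-th spoke joining the
`i`-th and the `(i+1)`-st principal cycle. -/
def spokeInV (r : ℕ) (i : Fin (r - 1)) (k : ℕ) : HexV r :=
  ⟨⟨i.val + 1, by have := i.isLt; omega⟩,
    ((k / (i.val + 1)) * (2 * (i.val + 1) + 1) + 2 * (k % (i.val + 1)) + 1 : ℕ)⟩

/-- The hexagonal grid of radius `r` (`r` concentric cycles of hexagons): its vertices
lie on `r` principal cycles, the `i`-th principal cycle (0-indexed) having
`6 * (2 * i + 1)` vertices and being joined to the next one by `6 * (i + 1)` spokes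
attached alternatingly. -/
def hexGrid (r : ℕ) : MGraph where
  V := HexV r
  E := ((i : Fin r) × ZMod (6 * (2 * i.val + 1))) ⊕ ((i : Fin (r - 1)) × ZMod (6 * (i.val + 1)))
  ends := fun e => match e with
    | .inl ⟨i, j⟩ => s((⟨i, j⟩ : HexV r), ⟨i, j + 1⟩)
    | .inr ⟨i, k⟩ => s(spokeOutV r i k.val, spokeInV r i k.val)
  loopless := by
    rintro (⟨i, j⟩ | ⟨i, k⟩) h
    · rw [Sym2.mk_isDiag_iff] at h
      have hj : j = j + 1 := eq_of_heq (Sigma.ext_iff.mp h).2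
      have h1 : (1 : ZMod (6 * (2 * i.val + 1))) = 0 := left_eq_add.mp hj
      haveI : Fact (1 < 6 * (2 * i.val + 1)) := ⟨by omega⟩
      exact one_ne_zero h1
    · rw [Sym2.mk_isDiag_iff] at h
      have := congrArg (fun v : HexV r => v.1.val) h
      simp [spokeOutV, spokeInV] at this

@[simp] lemma hexGrid_ends_inl (r : ℕ) (i : Fin r) (j : ZMod (6 * (2 * i.val + 1))) :
    (hexGrid r).ends (Sum.inl ⟨i, j⟩) = s((⟨i, j⟩ : HexV r), ⟨i, j + 1⟩) := rfl

@[simp] lemma hexGrid_ends_inr (r : ℕ) (i : Fin (r - 1)) (k : ZMod (6 * (i.val + 1))) :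
    (hexGrid r).ends (Sum.inr ⟨i, k⟩) = s(spokeOutV r i k.val, spokeInV r i k.val) := rfl

/-- The `i`-th principal cycle of the hexagonal grid of radius `r` (`i` is 0-indexed,
so `i = ⟨0, _⟩` is the innermost principal cycle `C_1` of the paper and
`i = ⟨r-1, _⟩` the outermost one `C_r`). -/
def principalCycle (r : ℕ) (i : Fin r) : (hexGrid r).Subgraph where
  verts := {v | v.1 = i}
  edges := {e | ∃ j, e = Sum.inl ⟨i, j⟩}
  closed := by
    rintro e ⟨j, rfl⟩ v hv
    rw [hexGrid_ends_inl] at hv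
    replace hv := Sym2.mem_iff.mp hv
    rcases hv with rfl | rfl <;> rfl

/-- The subgrid `H^i` of the hexagonal grid bounded by the `i`-th principal cycle:
the induced subgraph on the vertices of the principal cycles `C_1, …, C_i`. -/
def hexSubgridLE (r : ℕ) (i : Fin r) : (hexGrid r).Subgraph :=
  (hexGrid r).induce {v | v.1 ≤ i}

/-- The subgrid `H^i ∖ C_i` of the hexagonal grid: everything strictly inside the
`i`-th principal cycle. -/
def hexSubgridLT (r : ℕ) (i : Fin r) : (hexGrid r).Subgraph :=
  (hexGrid r).induce {v | v.1 < i}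

namespace TopEmb

variable {G : MGraph} {r : ℕ}

/-- An attachment of a topological embedding `h : H_r → G`: an `h(H_r)`-component of
`G` that intersects the interior `h(H_r ∖ C_r)` of `h(H_r)`. -/
def IsAttachment (h : TopEmb (hexGrid r) G) (C : G.Subgraph) : Prop :=
  G.IsHComp h.image C ∧
  (C.verts ∩ (h.imageOf ((hexGrid r).deleteVerts {v | v.1.val = r - 1})).verts).Nonempty

/-- A topological embedding `h : H_r → G` is flat if the union of `h(H_r)` with all
its attachments is planar. -/
def Flat (h : TopEmb (hexGrid r) G) : Prop :=
  ((h.image.union (MGraph.Subgraph.sUnion {C | h.IsAttachment C})).toGraph).IsPlanar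

/-- The subgraph `K_i` of `G`: the image `h(H^i)` together with all attachments of
`h(H_r)` that intersect the interior `h(H^i ∖ C_i)`. -/
def K (h : TopEmb (hexGrid r) G) (i : Fin r) : G.Subgraph :=
  (h.imageOf (hexSubgridLE r i)).union
    (MGraph.Subgraph.sUnion {C | h.IsAttachment C ∧
      (C.verts ∩ (h.imageOf (hexSubgridLT r i)).verts).Nonempty})

/-- The edge set `F_i`: all edges of `K_i` having at least one endpoint on `h(C_i)`. -/
def Fset (h : TopEmb (hexGrid r) G) (i : Fin r) : Set G.E :=
  {e | e ∈ (h.K i).edges ∧ ∃ v ∈ G.ends e, v ∈ (h.imageOf (principalCycle r i)).verts}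

/-- The subgraph `I_i = K_i ∖ h(C_i)`: delete from `K_i` all vertices of `h(C_i)` and
all edges incident with them. -/
def Iset (h : TopEmb (hexGrid r) G) (i : Fin r) : G.Subgraph :=
  (h.K i).delete (h.imageOf (principalCycle r i)).verts

end TopEmb
/-! ### Graph constructions -/

namespace MGraph

open Classical in
/-- The graph obtained from `G` by contracting the (induced) subgraph on a vertex set
`A` to a single new vertex: all vertices of `A` and all edges with both endpoints in
`A` are deleted, a new vertex (the vertex `Sum.inr ()`) is added, and every edge with
exactly one endpoint in `A` now joins its other endpoint to the new vertex. -/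
noncomputable def contract (G : MGraph) (A : Set G.V) : MGraph where
  V := {v : G.V // v ∉ A} ⊕ Unit
  E := {e : G.E // ∃ v ∈ G.ends e, v ∉ A}
  ends := fun e => (G.ends e.val).map
    (fun v => if h : v ∈ A then Sum.inr () else Sum.inl ⟨v, h⟩)
  loopless := by
    intro e he
    obtain ⟨v, hv, hvA⟩ := e.2
    obtain ⟨⟨a, b⟩, hab⟩ := Quot.exists_rep (G.ends e.val)
    have hab' : G.ends e.val = s(a, b) := hab.symm
    have hne : a ≠ b := fun hh => G.loopless e.val (by rw [hab']; exact Sym2.mk_isDiag_iff.mpr hh)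
    rw [hab'] at he hv
    rw [Sym2.map_pair_eq, Sym2.mk_isDiag_iff] at he
    rw [Sym2.mem_iff] at hv
    by_cases ha : a ∈ A <;> by_cases hb : b ∈ A
    · rcases hv with rfl | rfl <;> exact hvA (by assumption)
    · rw [dif_pos ha, dif_neg hb] at he; exact absurd he (by simp)
    · rw [dif_neg ha, dif_pos hb] at he; exact absurd he (by simp)
    · rw [dif_neg ha, dif_neg hb] at he
      exact hne (congrArg Subtype.val (Sum.inl_injective he))

/-- The graph `G^{e₁ × e₂}` obtained from `G` by crossing the two distinct edges
`e₁` and `e₂`: delete `e₁` and `e₂`, add a new vertex (the vertex `Sum.inr ()`), and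
add four new edges joining the new vertex to the two endpoints of `e₁` and to the two
endpoints of `e₂`. -/
def crossAt (G : MGraph) (e₁ e₂ : G.E) : MGraph where
  V := G.V ⊕ Unit
  E := {e : G.E // e ≠ e₁ ∧ e ≠ e₂} ⊕
    {p : Fin 2 × G.V // p.2 ∈ G.ends (if p.1 = 0 then e₁ else e₂)}
  ends := fun f => match f with
    | .inl g => (G.ends g.val).map Sum.inl
    | .inr p => s(Sum.inl p.val.2, Sum.inr ())
  loopless := by
    rintro (g | p) h
    · exact G.loopless g.val ((Sym2.isDiag_map Sum.inl_injective).mp h)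
    · rw [Sym2.mk_isDiag_iff] at h
      exact absurd h (by simp)

/-- A set `F` of edges of `G`, viewed as a set of edges of `G^{e₁ × e₂}` (only
meaningful when `e₁, e₂ ∉ F`). -/
def liftF (G : MGraph) (e₁ e₂ : G.E) (F : Set G.E) : Set (G.crossAt e₁ e₂).E :=
  {f | ∃ g : {e : G.E // e ≠ e₁ ∧ e ≠ e₂}, f = Sum.inl g ∧ g.val ∈ F}

/-- The `j`-th vertex (for `0 ≤ j ≤ k`) on the path of length `k` replacing the
edge `e` in the subdivision of `G` in which every edge is subdivided `k - 1` times. -/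
noncomputable def subdivVert (G : MGraph) (k : ℕ) (e : G.E) (j : ℕ) : G.V ⊕ (G.E × Fin (k - 1)) :=
  if h0 : j = 0 then Sum.inl (Quot.out (G.ends e)).1
  else if h : j < k then Sum.inr (e, ⟨j - 1, by omega⟩)
  else Sum.inl (Quot.out (G.ends e)).2

/-- The graph `G̃` obtained from `G` by subdividing every edge `k - 1` times, that
is, replacing every edge by a path of length `k` (for `k ≥ 1`). -/
noncomputable def subdivide (G : MGraph) (k : ℕ) : MGraph where
  V := G.V ⊕ (G.E × Fin (k - 1))
  E := G.E × Fin k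
  ends := fun p => s(G.subdivVert k p.1 p.2.val, G.subdivVert k p.1 (p.2.val + 1))
  loopless := by
    rintro ⟨e, j⟩ h
    dsimp only at h
    rw [Sym2.mk_isDiag_iff] at h
    have hj : j.val < k := j.isLt
    unfold subdivVert at h
    by_cases h0 : j.val = 0
    · rw [dif_pos h0] at h
      by_cases h1 : j.val + 1 < k
      · rw [dif_neg (by omega), dif_pos h1] at h
        exact absurd h (by simp)
      · rw [dif_neg (by omega), dif_neg (by omega)] at h
        exact sym2_out_ne _ (G.loopless e) (Sum.inl_injective h)
    · rw [dif_neg h0, dif_pos hj] at h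
      by_cases h1 : j.val + 1 < k
      · rw [dif_neg (by omega), dif_pos h1] at h
        have h3 := Sum.inr_injective h
        rw [Prod.mk.injEq] at h3
        have h2 : j.val - 1 = j.val + 1 - 1 := congrArg Fin.val h3.2
        omega
      · rw [dif_neg (by omega), dif_neg (by omega)] at h
        exact absurd h (by simp)

/-- The set of edges of the subdivision `G̃` of `G` arising from the subdivision of
an edge in `F`. -/
def subdivF (G : MGraph) (k : ℕ) (F : Set G.E) : Set (G.subdivide k).E :=
  {p | p.1 ∈ F}

/-- The graph `G^{×ē}` obtained from `G` by successively crossing `e 0` with `e 1`,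
`e 2` with `e 3`, …, `e (2l-2)` with `e (2l-1)` (for pairwise distinct edges
`e 0, …, e (2l-1)`): the crossed edges are deleted, `l` new vertices are added (one
for each pair), and each new vertex is joined by four new edges to the endpoints of
the two edges of its pair. -/
def multiCross (G : MGraph) (l : ℕ) (e : Fin (2 * l) → G.E) : MGraph where
  V := G.V ⊕ Fin l
  E := {f : G.E // ∀ i, f ≠ e i} ⊕ {p : Fin (2 * l) × G.V // p.2 ∈ G.ends (e p.1)}
  ends := fun f => match f with
    | .inl g => (G.ends g.val).map Sum.inl
    | .inr p => s(Sum.inl p.val.2,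
        (Sum.inr ⟨p.val.1.val / 2, by have := p.val.1.isLt; omega⟩ : G.V ⊕ Fin l))
  loopless := by
    rintro (g | p) h
    · exact G.loopless g.val ((Sym2.isDiag_map Sum.inl_injective).mp h)
    · rw [Sym2.mk_isDiag_iff] at h
      exact absurd h (by simp)

end MGraph

set_option maxHeartbeats 1000000

namespace SubdivAux

open Set

/-- The set of double points (parameter pairs) of a curve on `[0,1]`. -/
def dset (γ : ℝ → ℝ × ℝ) : Set (ℝ × ℝ) :=
  {p | p.1 ∈ Icc (0:ℝ) 1 ∧ p.2 ∈ Icc (0:ℝ) 1 ∧ p.1 < p.2 ∧ γ p.1 = γ p.2}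

lemma injOn_of_dset_empty {γ : ℝ → ℝ × ℝ} (h : dset γ = ∅) : Set.InjOn γ (Icc 0 1) := by
  intro u hu v hv huv
  by_contra hne
  rcases lt_or_gt_of_ne hne with hlt | hlt
  · exact absurd (show (u, v) ∈ dset γ from ⟨hu, hv, hlt, huv⟩) (by simp [h])
  · exact absurd (show (v, u) ∈ dset γ from ⟨hv, hu, hlt, huv.symm⟩) (by simp [h])

lemma dset_step {γ : ℝ → ℝ × ℝ} {ψ : ℝ → ℝ} (hf : (dset γ).Finite)
    (hmono : StrictMonoOn ψ (Icc 0 1)) (hmaps : MapsTo ψ (Icc 0 1) (Icc 0 1))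
    {s t : ℝ} (hmem : (s, t) ∈ dset γ)
    (hne : ∀ u v : ℝ, u ∈ Icc (0:ℝ) 1 → v ∈ Icc (0:ℝ) 1 → (ψ u, ψ v) ≠ (s, t)) :
    (dset (fun u => γ (ψ u))).Finite ∧ (dset (fun u => γ (ψ u))).ncard < (dset γ).ncard := by
  have hsub : (Prod.map ψ ψ) '' dset (fun u => γ (ψ u)) ⊆ dset γ \ {(s, t)} := by
    rintro _ ⟨⟨u, v⟩, ⟨hu, hv, huv, hval⟩, rfl⟩
    refine ⟨⟨hmaps hu, hmaps hv, hmono hu hv huv, hval⟩, ?_⟩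
    simp only [mem_singleton_iff]
    exact hne u v hu hv
  have hinj : Set.InjOn (Prod.map ψ ψ) (dset (fun u => γ (ψ u))) := by
    rintro ⟨u, v⟩ ⟨hu, hv, -, -⟩ ⟨u', v'⟩ ⟨hu', hv', -, -⟩ hval
    have h1 := congrArg Prod.fst hval
    have h2 := congrArg Prod.snd hval
    simp only [Prod.map] at h1 h2
    exact Prod.ext (hmono.injOn hu hu' h1) (hmono.injOn hv hv' h2)
  have hfin : (dset (fun u => γ (ψ u))).Finite :=
    Set.Finite.of_finite_image (hf.diff.subset hsub) hinj
  refine ⟨hfin, ?_⟩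
  calc (dset (fun u => γ (ψ u))).ncard = ((Prod.map ψ ψ) '' dset (fun u => γ (ψ u))).ncard :=
        (Set.ncard_image_of_injOn hinj).symm
    _ ≤ (dset γ \ {(s, t)}).ncard := Set.ncard_le_ncard hsub hf.diff
    _ < (dset γ).ncard := Set.ncard_diff_singleton_lt_of_mem hmem hf

lemma shortcut (n : ℕ) : ∀ γ : ℝ → ℝ × ℝ, Continuous γ → (dset γ).Finite →
    (dset γ).ncard ≤ n → γ 0 ≠ γ 1 →
    ∃ γ' : ℝ → ℝ × ℝ, Continuous γ' ∧ Set.InjOn γ' (Icc 0 1) ∧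
      γ' 0 = γ 0 ∧ γ' 1 = γ 1 ∧ γ' '' Icc 0 1 ⊆ γ '' Icc 0 1 := by
  induction n with
  | zero =>
    intro γ hc hf hn _
    have hD : dset γ = ∅ := by
      rw [← Set.ncard_eq_zero hf]; omega
    exact ⟨γ, hc, injOn_of_dset_empty hD, rfl, rfl, subset_rfl⟩
  | succ n IH =>
    intro γ hc hf hn hne01
    by_cases hD : dset γ = ∅
    · exact ⟨γ, hc, injOn_of_dset_empty hD, rfl, rfl, subset_rfl⟩
    obtain ⟨⟨s, t⟩, hmem⟩ := Set.nonempty_iff_ne_empty.mpr hD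
    obtain ⟨hs, ht, hst, hval⟩ := hmem
    dsimp only at hs ht hst hval
    by_cases hs0 : s = 0
    · -- drop the initial loop: reparametrize [t,1]
      subst hs0
      have ht1 : t < 1 := by
        rcases lt_or_eq_of_le ht.2 with h | h
        · exact h
        · exact absurd (h ▸ hval) hne01
      set ψ : ℝ → ℝ := fun u => t + (1 - t) * u with hψ
      have hmono : StrictMonoOn ψ (Icc 0 1) := by
        intro u _ v _ huv
        simp only [hψ]
        nlinarith
      have hmaps : MapsTo ψ (Icc 0 1) (Icc 0 1) := by
        intro u hu
        simp only [hψ]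
        constructor <;> nlinarith [hu.1, hu.2, hst]
      have hnepair : ∀ u v : ℝ, u ∈ Icc (0:ℝ) 1 → v ∈ Icc (0:ℝ) 1 →
          (ψ u, ψ v) ≠ ((0:ℝ), t) := by
        intro u v hu hv hcon
        rw [Prod.mk.injEq] at hcon
        have h1 := hcon.1
        simp only [hψ] at h1
        nlinarith [hu.1, hu.2, hst]
      obtain ⟨hfin, hlt⟩ := dset_step hf hmono hmaps ⟨hs, ht, hst, hval⟩ hnepair
      have hcont : Continuous fun u => γ (ψ u) := hc.comp (by continuity)
      obtain ⟨γ', h1, h2, h3, h4, h5⟩ := IH (fun u => γ (ψ u)) hcont hfin (by omega)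
        (by simpa [hψ, hval.symm] using hne01)
      refine ⟨γ', h1, h2, ?_, ?_, ?_⟩
      · rw [h3]; simp only [hψ]; rw [show t + (1-t)*0 = t by ring, ← hval]
      · rw [h4]; simp only [hψ]; norm_num
      · refine h5.trans ?_
        rintro _ ⟨u, hu, rfl⟩
        exact ⟨ψ u, hmaps hu, rfl⟩
    by_cases ht1 : t = 1
    · -- drop the final loop
      subst ht1
      have hs1 : 0 < s := lt_of_le_of_ne hs.1 (Ne.symm hs0)
      set ψ : ℝ → ℝ := fun u => s * u with hψ
      have hmono : StrictMonoOn ψ (Icc 0 1) := by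
        intro u _ v _ huv
        simp only [hψ]
        nlinarith
      have hmaps : MapsTo ψ (Icc 0 1) (Icc 0 1) := by
        intro u hu
        simp only [hψ]
        constructor <;> nlinarith [hu.1, hu.2, hs.2]
      have hnepair : ∀ u v : ℝ, u ∈ Icc (0:ℝ) 1 → v ∈ Icc (0:ℝ) 1 →
          (ψ u, ψ v) ≠ (s, (1:ℝ)) := by
        intro u v hu hv hcon
        rw [Prod.mk.injEq] at hcon
        have h1 := hcon.2
        simp only [hψ] at h1
        nlinarith [hv.1, hv.2, hst]
      obtain ⟨hfin, hlt⟩ := dset_step hf hmono hmaps ⟨hs, ht, hst, hval⟩ hnepair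
      have hcont : Continuous fun u => γ (ψ u) := hc.comp (by continuity)
      obtain ⟨γ', h1, h2, h3, h4, h5⟩ := IH (fun u => γ (ψ u)) hcont hfin (by omega)
        (by simpa [hψ, hval] using hne01)
      refine ⟨γ', h1, h2, ?_, ?_, ?_⟩
      · rw [h3]; simp only [hψ]; norm_num
      · rw [h4]; simp only [hψ]; rw [show s * 1 = s by ring, hval]
      · refine h5.trans ?_
        rintro _ ⟨u, hu, rfl⟩
        exact ⟨ψ u, hmaps hu, rfl⟩
    · -- middle case : 0 < s < t < 1
      have hs1 : 0 < s := lt_of_le_of_ne hs.1 (Ne.symm hs0)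
      have ht2 : t < 1 := lt_of_le_of_ne ht.2 ht1
      set ψ : ℝ → ℝ := fun u => if u ≤ 1/2 then 2*s*u else t + (2*u - 1)*(1 - t) with hψ
      have hψle : ∀ u : ℝ, u ≤ 1/2 → ψ u = 2*s*u := fun u hu => if_pos hu
      have hψgt : ∀ u : ℝ, ¬ u ≤ 1/2 → ψ u = t + (2*u - 1)*(1 - t) := fun u hu => if_neg hu
      have hmono : StrictMonoOn ψ (Icc 0 1) := by
        intro u hu v hv huv
        by_cases h1 : u ≤ 1/2 <;> by_cases h2 : v ≤ 1/2
        · rw [hψle u h1, hψle v h2]; nlinarith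
        · rw [hψle u h1, hψgt v h2]
          push_neg at h2
          nlinarith [hu.1]
        · exact absurd (huv.trans_le h2) (not_lt.mpr (le_of_not_ge h1))
        · rw [hψgt u h1, hψgt v h2]; nlinarith
      have hmaps : MapsTo ψ (Icc 0 1) (Icc 0 1) := by
        intro u hu
        by_cases h1 : u ≤ 1/2
        · rw [hψle u h1]
          constructor <;> nlinarith [hu.1, hs.2]
        · rw [hψgt u h1]
          push_neg at h1
          constructor <;> nlinarith [hu.2, ht.1]
      have hnepair : ∀ u v : ℝ, u ∈ Icc (0:ℝ) 1 → v ∈ Icc (0:ℝ) 1 →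
          (ψ u, ψ v) ≠ (s, t) := by
        intro u v hu hv hcon
        rw [Prod.mk.injEq] at hcon
        have h2 := hcon.2
        by_cases hv2 : v ≤ 1/2
        · rw [hψle v hv2] at h2; nlinarith [hv.1, hst, hs.2]
        · rw [hψgt v hv2] at h2
          push_neg at hv2
          nlinarith [ht2]
      obtain ⟨hfin, hlt⟩ := dset_step hf hmono hmaps ⟨hs, ht, hst, hval⟩ hnepair
      have hcont : Continuous fun u => γ (ψ u) := by
        have : (fun u => γ (ψ u)) =
            fun u : ℝ => if u ≤ 1/2 then γ (2*s*u) else γ (t + (2*u - 1)*(1 - t)) := by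
          funext u
          simp only [hψ, apply_ite γ]
        rw [this]
        refine Continuous.if_le (hc.comp (by continuity)) (hc.comp (by continuity))
          continuous_id continuous_const ?_
        intro x hx
        rw [hx]
        rw [show 2*s*(1/2 : ℝ) = s by ring, show t + (2*(1/2:ℝ) - 1)*(1-t) = t by ring]
        exact hval
      have hψ0 : ψ 0 = 0 := by rw [hψle 0 (by norm_num)]; ring
      have hψ1 : ψ 1 = 1 := by rw [hψgt 1 (by norm_num)]; ring
      obtain ⟨γ', h1, h2, h3, h4, h5⟩ := IH (fun u => γ (ψ u)) hcont hfin (by omega)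
        (by simpa only [hψ0, hψ1] using hne01)
      refine ⟨γ', h1, h2, by rw [h3, hψ0], by rw [h4, hψ1], ?_⟩
      refine h5.trans ?_
      rintro _ ⟨u, hu, rfl⟩
      exact ⟨ψ u, hmaps hu, rfl⟩

end SubdivAux



namespace SubdivAux

open Set

lemma cuts (k : ℕ) (hk : 1 ≤ k) (S : Set ℝ) (hf : S.Finite) (hsub : S ⊆ Set.Ioo 0 1)
    (hcard : S.ncard ≤ k) :
    ∃ t : ℕ → ℝ, t 0 = 0 ∧ t k = 1 ∧ (∀ a b : ℕ, a < b → b ≤ k → t a < t b) ∧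
      (∀ j, 0 < j → j < k → t j ∉ S) ∧
      ∀ j < k, (S ∩ Set.Icc (t j) (t (j + 1))).Subsingleton := by
  -- pad S to a set R of exactly k points
  obtain ⟨R, hSR, hRsub, hRcard⟩ :=
    (Set.Ioo_infinite (show (0:ℝ) < 1 by norm_num)).exists_superset_ncard_eq hsub hf hcard
  have hRfin : R.Finite := Set.finite_of_ncard_ne_zero (by omega)
  have hFcard : hRfin.toFinset.card = k := by
    rw [← Set.ncard_eq_toFinset_card R hRfin]
    exact hRcard
  set u : Fin k ↪o ℝ := hRfin.toFinset.orderEmbOfFin hFcard with hu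
  have humem : ∀ i : Fin k, u i ∈ Set.Ioo (0:ℝ) 1 := fun i =>
    hRsub (hRfin.mem_toFinset.mp (Finset.orderEmbOfFin_mem _ hFcard i))
  have humono : ∀ i j : Fin k, i < j → u i < u j := fun i j hij => u.strictMono hij
  have hRsurj : ∀ x ∈ R, ∃ i : Fin k, u i = x := by
    intro x hx
    have : x ∈ Set.range u := by
      rw [hu, Finset.range_orderEmbOfFin]
      exact hRfin.mem_toFinset.mpr hx
    exact this
  classical
  set t : ℕ → ℝ := fun j =>
    if j = 0 then 0 else if h : j < k then (u ⟨j - 1, by omega⟩ + u ⟨j, h⟩) / 2 else 1 with htdef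
  have ht0 : t 0 = 0 := by simp [htdef]
  have htk : t k = 1 := by simp [htdef, hk, Nat.lt_irrefl]; omega
  have htmid : ∀ j (h0 : 0 < j) (h : j < k), t j = (u ⟨j - 1, by omega⟩ + u ⟨j, h⟩) / 2 := by
    intro j h0 h
    simp [htdef, Nat.pos_iff_ne_zero.mp h0, h]
  have htlow : ∀ j (h0 : 0 < j) (h : j < k), u ⟨j - 1, by omega⟩ < t j := by
    intro j h0 h
    rw [htmid j h0 h]
    have := humono ⟨j - 1, by omega⟩ ⟨j, h⟩ (by simp [Fin.lt_def]; omega)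
    linarith
  have hthigh : ∀ j (h0 : 0 < j) (h : j < k), t j < u ⟨j, h⟩ := by
    intro j h0 h
    rw [htmid j h0 h]
    have := humono ⟨j - 1, by omega⟩ ⟨j, h⟩ (by simp [Fin.lt_def]; omega)
    linarith
  have hsucc : ∀ j, j < k → t j < t (j + 1) := by
    intro j hj
    by_cases h0 : j = 0
    · subst h0
      rw [ht0]
      by_cases h1 : 1 < k
      · rw [htmid 1 one_pos h1]
        have a := (humem ⟨0, by omega⟩).1
        have b := (humem ⟨1, h1⟩).1
        linarith
      · have : k = 1 := by omega
        subst this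
        rw [htk]; norm_num
    · have h0' : 0 < j := Nat.pos_of_ne_zero h0
      by_cases h1 : j + 1 < k
      · have a := hthigh j h0' hj
        have b := htlow (j + 1) (by omega) h1
        have : u ⟨j, hj⟩ = u ⟨j + 1 - 1, by omega⟩ := by congr 1
        rw [this] at a
        linarith
      · have : j + 1 = k := by omega
        rw [this, htk]
        have a := hthigh j h0' hj
        have b := (humem ⟨j, hj⟩).2
        linarith
  have htmono : ∀ a b : ℕ, a < b → b ≤ k → t a < t b := by
    intro a b hab hbk
    induction b with
    | zero => omega
    | succ m ihm =>
      rcases Nat.lt_or_ge a m with h | h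
      · exact lt_trans (ihm h (by omega)) (hsucc m (by omega))
      · have : a = m := by omega
        subst this
        exact hsucc a (by omega)
  refine ⟨t, ht0, htk, htmono, ?_, ?_⟩
  · intro j h0 hj hjS
    obtain ⟨i, hi⟩ := hRsurj _ (hSR hjS)
    have a := htlow j h0 hj
    have b := hthigh j h0 hj
    rcases lt_trichotomy i ⟨j, hj⟩ with h | h | h
    · have : i ≤ ⟨j - 1, by omega⟩ := by
        rw [Fin.le_def]; rw [Fin.lt_def] at h; simp at h ⊢; omega
      have := u.monotone this
      rw [hi] at this
      linarith
    · rw [h] at hi; linarith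
    · have := humono _ _ h
      rw [hi] at this
      linarith
  · intro j hj x hx y hy
    obtain ⟨a, ha⟩ := hRsurj _ (hSR hx.1)
    obtain ⟨b, hb⟩ := hRsurj _ (hSR hy.1)
    have key : ∀ (c : Fin k) (z : ℝ), u c = z → z ∈ Set.Icc (t j) (t (j+1)) → c = ⟨j, hj⟩ := by
      intro c z hc hz
      have hclow : j ≤ c.val := by
        by_cases h0 : j = 0
        · omega
        · by_contra hcon
          push_neg at hcon
          have : c ≤ ⟨j - 1, by omega⟩ := by rw [Fin.le_def]; simp; omega
          have h2 := u.monotone this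
          rw [hc] at h2
          have := htlow j (by omega) hj
          have := hz.1
          linarith
      have hchigh : c.val ≤ j := by
        by_cases h1 : j + 1 < k
        · by_contra hcon
          push_neg at hcon
          have : (⟨j + 1, h1⟩ : Fin k) ≤ c := by rw [Fin.le_def]; simp; omega
          have h2 := u.monotone this
          rw [hc] at h2
          have := hthigh (j + 1) (by omega) h1
          have := hz.2
          linarith
        · push_neg at h1
          have h2 : c.val < k := c.isLt
          omega
      apply Fin.ext
      show c.val = j
      omega
    have ha' := key a x ha ⟨hx.2.1, hx.2.2⟩
    have hb' := key b y hb ⟨hy.2.1, hy.2.2⟩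
    rw [← ha, ← hb, ha', hb']

end SubdivAux

namespace SubdivAux

open Set

variable {G : MGraph} {k : ℕ}

lemma sdv_zero (e : G.E) : G.subdivVert k e 0 = Sum.inl (Quot.out (G.ends e)).1 := dif_pos rfl

lemma sdv_mid (e : G.E) {m : ℕ} (h0 : 0 < m) (h : m < k) :
    G.subdivVert k e m = Sum.inr (e, ⟨m - 1, by omega⟩) := by
  unfold MGraph.subdivVert
  rw [dif_neg (by omega), dif_pos h]

lemma sdv_last (hk : 1 ≤ k) (e : G.E) :
    G.subdivVert k e k = Sum.inl (Quot.out (G.ends e)).2 := by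
  unfold MGraph.subdivVert
  rw [dif_neg (by omega), dif_neg (by omega)]

lemma sdv_out_ne (e : G.E) : (Quot.out (G.ends e)).1 ≠ (Quot.out (G.ends e)).2 :=
  sym2_out_ne _ (G.loopless e)

private lemma classify {n : ℕ} (h : n ≤ k) : n = 0 ∨ (0 < n ∧ n < k) ∨ n = k := by omega

lemma sdv_inj (hk : 1 ≤ k) (e : G.E) {m m' : ℕ} (hm : m ≤ k) (hm' : m' ≤ k)
    (h : G.subdivVert k e m = G.subdivVert k e m') : m = m' := by
  rcases classify hm with rfl | ⟨h1, h2⟩ | rfl <;> rcases classify hm' with rfl | ⟨h1', h2'⟩ | rfl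
  · rfl
  · rw [sdv_zero, sdv_mid e h1' h2'] at h; exact absurd h (by simp)
  · rw [sdv_zero, sdv_last hk] at h
    simp only [Sum.inl.injEq] at h
    exact absurd h (sdv_out_ne e)
  · rw [sdv_zero, sdv_mid e h1 h2] at h; exact absurd h (by simp)
  · rw [sdv_mid e h1 h2, sdv_mid e h1' h2'] at h
    simp only [Sum.inr.injEq, Prod.mk.injEq, Fin.mk.injEq, true_and] at h
    omega
  · rw [sdv_mid e h1 h2, sdv_last hk] at h; exact absurd h (by simp)
  · rw [sdv_zero, sdv_last hk] at h
    simp only [Sum.inl.injEq] at h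
    exact absurd h.symm (sdv_out_ne e)
  · rw [sdv_mid e h1' h2', sdv_last hk] at h; exact absurd h (by simp)
  · rfl

lemma sdv_cross {e f : G.E} (hef : e ≠ f) {m m' : ℕ} (hm : m ≤ k) (hm' : m' ≤ k)
    (h : G.subdivVert k e m = G.subdivVert k f m') : m = 0 ∨ m = k := by
  rcases classify hm with rfl | ⟨h1, h2⟩ | rfl
  · exact Or.inl rfl
  · exfalso
    rcases classify hm' with rfl | ⟨h1', h2'⟩ | rfl
    · rw [sdv_mid e h1 h2, sdv_zero] at h; exact absurd h (by simp)
    · rw [sdv_mid e h1 h2, sdv_mid f h1' h2'] at h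
      simp only [Sum.inr.injEq, Prod.mk.injEq] at h
      exact hef h.1
    · rw [sdv_mid e h1 h2, sdv_last (by omega) f] at h; exact absurd h (by simp)
  · exact Or.inr rfl

lemma sdv_inr {e : G.E} {m : ℕ} (hm : m ≤ k) {p : G.E × Fin (k - 1)}
    (h : G.subdivVert k e m = Sum.inr p) : p.1 = e ∧ m = p.2.val + 1 := by
  have h1 : 0 < m := by
    rcases Nat.eq_zero_or_pos m with rfl | h1
    · rw [sdv_zero] at h; exact absurd h (by simp)
    · exact h1
  have h2 : m < k := by
    by_contra hcon
    have hmk : m = k := by omega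
    rw [hmk, sdv_last (by omega)] at h
    exact absurd h (by simp)
  rw [sdv_mid e h1 h2] at h
  simp only [Sum.inr.injEq] at h
  rw [← h]
  exact ⟨rfl, by simp; omega⟩

lemma ends_subdiv (e : G.E) (i : Fin k) :
    (G.subdivide k).ends (e, i) =
      s(G.subdivVert k e i.val, G.subdivVert k e (i.val + 1)) := rfl

lemma mem_ends_subdiv {w : (G.subdivide k).V} {e : G.E} {i : Fin k}
    (h : w ∈ (G.subdivide k).ends (e, i)) :
    w = G.subdivVert k e i.val ∨ w = G.subdivVert k e (i.val + 1) := by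
  rw [ends_subdiv] at h
  exact Sym2.mem_iff.mp h

lemma vertex_arc {Δ : Drawing (G.subdivide k)} {w : (G.subdivide k).V} {e : G.E} {i : Fin k}
    (h : Δ.vpos w ∈ Δ.arc (e, i)) :
    ∃ m, m ≤ k ∧ w = G.subdivVert k e m ∧ (m = i.val ∨ m = i.val + 1) := by
  have hi := i.isLt
  rcases mem_ends_subdiv (Δ.vertex_on_arc (e, i) w h) with h' | h'
  · exact ⟨i.val, by omega, h', Or.inl rfl⟩
  · exact ⟨i.val + 1, by omega, h', Or.inr rfl⟩

lemma vpos_not_crossing (Δ : Drawing (G.subdivide k)) (w : (G.subdivide k).V) :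
    Δ.vpos w ∉ Δ.crossings := fun h => h.1 ⟨w, rfl⟩

lemma exists_oriented (Δ : Drawing (G.subdivide k)) (e : G.E) (i : Fin k) :
    ∃ q : ℝ → ℝ × ℝ, Continuous q ∧ Set.InjOn q (Icc 0 1) ∧
      q 0 = Δ.vpos (G.subdivVert k e i.val) ∧
      q 1 = Δ.vpos (G.subdivVert k e (i.val + 1)) ∧
      q '' Icc 0 1 ⊆ Δ.arc (e, i) := by
  set cl : ℝ → ℝ := fun u => max 0 (min 1 u) with hcl
  have hclcont : Continuous cl := continuous_const.max (continuous_const.min continuous_id)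
  have hclmem : ∀ u, cl u ∈ Icc (0:ℝ) 1 :=
    fun u => ⟨le_max_left _ _, max_le zero_le_one (min_le_left _ _)⟩
  have hcleq : ∀ u ∈ Icc (0:ℝ) 1, cl u = u := by
    intro u hu
    rw [hcl]
    simp only
    rw [min_eq_right hu.2, max_eq_right hu.1]
  obtain ⟨v, w, hvw, h0, h1⟩ := Δ.ends_match (e, i)
  rw [ends_subdiv] at hvw
  replace hvw := Sym2.eq_iff.mp hvw
  rcases hvw with ⟨hv, hw⟩ | ⟨hv, hw⟩
  · refine ⟨fun u => Δ.par (e, i) (cl u), ?_, ?_, ?_, ?_, ?_⟩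
    · exact (Δ.par_cont (e, i)).comp_continuous hclcont hclmem
    · intro u hu u' hu' huu
      have := Δ.par_inj (e, i) (hclmem u) (hclmem u') huu
      rwa [hcleq u hu, hcleq u' hu'] at this
    · show Δ.par (e, i) (cl 0) = _
      rw [hcleq 0 ⟨le_refl _, zero_le_one⟩, h0, hv]
    · show Δ.par (e, i) (cl 1) = _
      rw [hcleq 1 ⟨zero_le_one, le_refl _⟩, h1, hw]
    · rintro _ ⟨u, -, rfl⟩
      exact ⟨cl u, hclmem u, rfl⟩
  · refine ⟨fun u => Δ.par (e, i) (cl (1 - u)), ?_, ?_, ?_, ?_, ?_⟩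
    · exact (Δ.par_cont (e, i)).comp_continuous (hclcont.comp (by continuity)) fun u => hclmem _
    · intro u hu u' hu' huu
      have h2 := Δ.par_inj (e, i) (hclmem (1 - u)) (hclmem (1 - u')) huu
      rw [hcleq (1 - u) ⟨by linarith [hu.2], by linarith [hu.1]⟩,
        hcleq (1 - u') ⟨by linarith [hu'.2], by linarith [hu'.1]⟩] at h2
      linarith
    · show Δ.par (e, i) (cl (1 - 0)) = _
      rw [show (1:ℝ) - 0 = 1 by ring, hcleq 1 ⟨zero_le_one, le_refl _⟩, h1, hv]
    · show Δ.par (e, i) (cl (1 - 1)) = _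
      rw [show (1:ℝ) - 1 = 0 by ring, hcleq 0 ⟨le_refl _, zero_le_one⟩, h0, hw]
    · rintro _ ⟨u, -, rfl⟩
      exact ⟨cl (1 - u), hclmem _, rfl⟩

lemma exists_concat (hk : 1 ≤ k) (Δ : Drawing (G.subdivide k)) (e : G.E) :
    ∀ i, 1 ≤ i → i ≤ k → ∃ c : ℝ → ℝ × ℝ, Continuous c ∧
      c 0 = Δ.vpos (G.subdivVert k e 0) ∧ c 1 = Δ.vpos (G.subdivVert k e i) ∧
      (c '' Icc 0 1 ⊆ {x | ∃ j : Fin k, j.val < i ∧ x ∈ Δ.arc (e, j)}) ∧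
      (∀ x, x ∉ Δ.crossings → {u ∈ Icc (0:ℝ) 1 | c u = x}.Subsingleton) ∧
      (∀ x, {u ∈ Icc (0:ℝ) 1 | c u = x}.Finite) := by
  intro i hi
  induction i, hi using Nat.le_induction with
  | base =>
    intro h1k
    obtain ⟨q, hqc, hqi, hq0, hq1, hqim⟩ := exists_oriented Δ e ⟨0, by omega⟩
    refine ⟨q, hqc, hq0, hq1, ?_, ?_, ?_⟩
    · intro x hx
      exact ⟨⟨0, by omega⟩, by simp, hqim hx⟩
    · intro x _ u hu v hv
      exact hqi hu.1 hv.1 (hu.2.trans hv.2.symm)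
    · intro x
      refine Set.Subsingleton.finite ?_
      intro u hu v hv
      exact hqi hu.1 hv.1 (hu.2.trans hv.2.symm)
  | succ i hi1 IH =>
    intro hik
    have hikk : i < k := by omega
    obtain ⟨c, hcc, hc0, hc1, hcim, hcsub, hcfin⟩ := IH (by omega)
    obtain ⟨q, hqc, hqi, hq0, hq1, hqim⟩ := exists_oriented Δ e ⟨i, hikk⟩
    set c' : ℝ → ℝ × ℝ := fun u => if u ≤ (1/2 : ℝ) then c (2*u) else q (2*u - 1) with hc'
    have hc'le : ∀ u : ℝ, u ≤ 1/2 → c' u = c (2*u) := fun u hu => if_pos hu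
    have hc'gt : ∀ u : ℝ, ¬ u ≤ 1/2 → c' u = q (2*u - 1) := fun u hu => if_neg hu
    have hcont : Continuous c' := by
      rw [hc']
      refine Continuous.if_le (hcc.comp (by continuity)) (hqc.comp (by continuity))
        continuous_id continuous_const ?_
      intro x hx
      rw [hx, show (2:ℝ)*(1/2) - 1 = 0 by norm_num, show (2:ℝ)*(1/2) = 1 by norm_num,
        hc1, hq0]
    refine ⟨c', hcont, ?_, ?_, ?_, ?_, ?_⟩
    · rw [hc'le 0 (by norm_num), show (2:ℝ)*0 = 0 by ring, hc0]
    · rw [hc'gt 1 (by norm_num), show (2:ℝ)*1 - 1 = 1 by ring, hq1]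
    · rintro _ ⟨u, hu, rfl⟩
      by_cases h : u ≤ 1/2
      · rw [hc'le u h]
        obtain ⟨j, hj, hmem⟩ := hcim ⟨2*u, ⟨by linarith [hu.1], by linarith⟩, rfl⟩
        exact ⟨j, by omega, hmem⟩
      · rw [hc'gt u h]
        push_neg at h
        exact ⟨⟨i, hikk⟩, by simp, hqim ⟨2*u - 1, ⟨by linarith, by linarith [hu.2]⟩, rfl⟩⟩
    · intro x hx
      have hmix : ∀ u v : ℝ, u ∈ Icc (0:ℝ) 1 → v ∈ Icc (0:ℝ) 1 → u ≤ 1/2 → ¬ v ≤ 1/2 →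
          c (2*u) = x → q (2*v - 1) = x → False := by
        intro u v hu hv hu2 hv2 hcx hqx
        push_neg at hv2
        have h2u : (2*u : ℝ) ∈ Icc (0:ℝ) 1 := ⟨by linarith [hu.1], by linarith⟩
        have h2v : (2*v - 1 : ℝ) ∈ Icc (0:ℝ) 1 := ⟨by linarith, by linarith [hv.2]⟩
        obtain ⟨j, hji, hxarcj⟩ := hcim ⟨2*u, h2u, hcx⟩
        have hxarci : x ∈ Δ.arc (e, ⟨i, hikk⟩) := hqim ⟨2*v - 1, h2v, hqx⟩
        have hne : ((e, j) : (G.subdivide k).E) ≠ (e, ⟨i, hikk⟩) := by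
          intro hcon
          have := congrArg (fun p : (G.subdivide k).E => (p.2 : Fin k).val) hcon
          simp only at this
          omega
        by_cases hrange : x ∈ Set.range Δ.vpos
        · obtain ⟨w, hw⟩ := hrange
          obtain ⟨m, hm, hwm, hmor⟩ := vertex_arc (Δ := Δ) (w := w) (hw ▸ hxarcj)
          obtain ⟨m', hm', hwm', hmor'⟩ := vertex_arc (Δ := Δ) (w := w) (hw ▸ hxarci)
          have hmm : m = m' := sdv_inj hk e hm hm' (hwm ▸ hwm' ▸ rfl)
          have hji' : j.val < i := hji
          have hm'i : m' = i := by
            simp only at hmor'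
            omega
          have hxvp : x = Δ.vpos (G.subdivVert k e i) := by
            rw [← hw, hwm', hm'i]
          have h1mem : (1:ℝ) ∈ Icc (0:ℝ) 1 := ⟨zero_le_one, le_refl _⟩
          have h2u1 : 2*u = 1 := by
            have := hcsub x hx ⟨h2u, hcx⟩ ⟨h1mem, by rw [hc1, ← hxvp]⟩
            exact this
          have hq0x : q 0 = x := by
            rw [hq0]
            simp only [Fin.val_mk]
            exact hxvp.symm
          have := hqi h2v ⟨le_refl _, zero_le_one⟩ (by rw [hqx, hq0x])
          linarith
        · exact hx ⟨hrange, (e, j), (e, ⟨i, hikk⟩), hne, hxarcj, hxarci⟩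
      intro u hu v hv
      obtain ⟨huI, hux⟩ := hu
      obtain ⟨hvI, hvx⟩ := hv
      by_cases hu2 : u ≤ 1/2 <;> by_cases hv2 : v ≤ 1/2
      · rw [hc'le u hu2] at hux
        rw [hc'le v hv2] at hvx
        have := hcsub x hx ⟨⟨by linarith [huI.1], by linarith⟩, hux⟩
          ⟨⟨by linarith [hvI.1], by linarith⟩, hvx⟩
        linarith
      · rw [hc'le u hu2] at hux
        rw [hc'gt v hv2] at hvx
        exact absurd (hmix u v huI hvI hu2 hv2 hux hvx) not_false
      · rw [hc'gt u hu2] at hux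
        rw [hc'le v hv2] at hvx
        exact absurd (hmix v u hvI huI hv2 hu2 hvx hux) not_false
      · rw [hc'gt u hu2] at hux
        rw [hc'gt v hv2] at hvx
        push_neg at hu2 hv2
        have := hqi (⟨by linarith, by linarith [huI.2]⟩ : (2*u - 1 : ℝ) ∈ Icc (0:ℝ) 1)
          (⟨by linarith, by linarith [hvI.2]⟩ : (2*v - 1 : ℝ) ∈ Icc (0:ℝ) 1)
          (hux.trans hvx.symm)
        linarith
    · intro x
      have hsub : {u ∈ Icc (0:ℝ) 1 | c' u = x} ⊆
          (fun s => s/2) '' {s ∈ Icc (0:ℝ) 1 | c s = x} ∪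
          (fun s => (s+1)/2) '' {s ∈ Icc (0:ℝ) 1 | q s = x} := by
        rintro u ⟨huI, hux⟩
        by_cases h : u ≤ 1/2
        · rw [hc'le u h] at hux
          exact Or.inl ⟨2*u, ⟨⟨by linarith [huI.1], by linarith⟩, hux⟩, by ring⟩
        · rw [hc'gt u h] at hux
          push_neg at h
          exact Or.inr ⟨2*u - 1, ⟨⟨by linarith, by linarith [huI.2]⟩, hux⟩, by ring⟩
      refine Set.Finite.subset (Set.Finite.union ((hcfin x).image _) ?_) hsub
      refine Set.Finite.image _ (Set.Subsingleton.finite ?_)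
      intro a ha b hb
      exact hqi ha.1 hb.1 (ha.2.trans hb.2.symm)

lemma exists_gamma (hk : 1 ≤ k) (Δ : Drawing (G.subdivide k)) (hfin : Δ.crossings.Finite)
    (hcard : Δ.crossings.ncard ≤ k) (e : G.E) :
    ∃ (γ : ℝ → ℝ × ℝ) (t : ℕ → ℝ), Continuous γ ∧ Set.InjOn γ (Icc 0 1) ∧
      γ 0 = Δ.vpos (G.subdivVert k e 0) ∧ γ 1 = Δ.vpos (G.subdivVert k e k) ∧
      (γ '' Icc 0 1 ⊆ {x | ∃ j : Fin k, x ∈ Δ.arc (e, j)}) ∧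
      t 0 = 0 ∧ t k = 1 ∧ (∀ a b : ℕ, a < b → b ≤ k → t a < t b) ∧
      (∀ j, 0 < j → j < k → γ (t j) ∉ Δ.crossings) ∧
      (∀ j, j < k → {s ∈ Icc (t j) (t (j+1)) | γ s ∈ Δ.crossings}.Subsingleton) := by
  obtain ⟨c, hcc, hc0, hc1, hcim, hcsub, hcfin⟩ := exists_concat hk Δ e k hk le_rfl
  have hdsub : dset c ⊆ ⋃ x ∈ Δ.crossings,
      {u ∈ Icc (0:ℝ) 1 | c u = x} ×ˢ {u ∈ Icc (0:ℝ) 1 | c u = x} := by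
    rintro ⟨u, v⟩ ⟨hu, hv, huv, hval⟩
    dsimp only at hu hv huv hval
    have hxc : c u ∈ Δ.crossings := by
      by_contra hxc
      exact absurd (hcsub (c u) hxc ⟨hu, rfl⟩ ⟨hv, hval.symm⟩) (ne_of_lt huv)
    exact Set.mem_biUnion hxc ⟨⟨hu, rfl⟩, ⟨hv, hval.symm⟩⟩
  have hdfin : (dset c).Finite :=
    ((hfin.biUnion fun x _ => (hcfin x).prod (hcfin x)).subset hdsub)
  have hne01 : c 0 ≠ c 1 := by
    intro hcon
    rw [hc0, hc1] at hcon
    have := sdv_inj hk e (by omega) le_rfl (Δ.vpos_inj hcon)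
    omega
  obtain ⟨γ, hγc, hγi, hγ0, hγ1, hγim⟩ := shortcut (dset c).ncard c hcc hdfin le_rfl hne01
  set S : Set ℝ := {s ∈ Icc (0:ℝ) 1 | γ s ∈ Δ.crossings} with hS
  have hSfin : S.Finite := by
    have hsub : S ⊆ ⋃ x ∈ Δ.crossings, {s ∈ Icc (0:ℝ) 1 | γ s = x} :=
      fun s hs => Set.mem_biUnion hs.2 ⟨hs.1, rfl⟩
    refine ((hfin.biUnion fun x _ => Set.Subsingleton.finite ?_).subset hsub)
    intro a ha b hb
    exact hγi ha.1 hb.1 (ha.2.trans hb.2.symm)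
  have hScard : S.ncard ≤ k := by
    have h1 : γ '' S ⊆ Δ.crossings := by
      rintro _ ⟨s, hs, rfl⟩
      exact hs.2
    calc S.ncard = (γ '' S).ncard := (Set.ncard_image_of_injOn (hγi.mono fun s hs => hs.1)).symm
      _ ≤ Δ.crossings.ncard := Set.ncard_le_ncard h1 hfin
      _ ≤ k := hcard
  have hSsub : S ⊆ Set.Ioo (0:ℝ) 1 := by
    intro s hs
    refine ⟨lt_of_le_of_ne hs.1.1 ?_, lt_of_le_of_ne hs.1.2 ?_⟩
    · intro hcon
      have h2 := hs.2
      rw [← hcon, hγ0, hc0] at h2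
      exact vpos_not_crossing Δ _ h2
    · intro hcon
      have h2 := hs.2
      rw [hcon, hγ1, hc1] at h2
      exact vpos_not_crossing Δ _ h2
  obtain ⟨t, ht0, htk, htmono, htnS, htss⟩ := cuts k hk S hSfin hSsub hScard
  have htIcc : ∀ j, j ≤ k → t j ∈ Icc (0:ℝ) 1 := by
    intro j hj
    constructor
    · rcases Nat.eq_zero_or_pos j with rfl | h0
      · rw [ht0]
      · rw [← ht0]; exact le_of_lt (htmono 0 j h0 hj)
    · rcases eq_or_lt_of_le hj with rfl | hlt
      · rw [htk]
      · rw [← htk]; exact le_of_lt (htmono j k hlt le_rfl)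
  refine ⟨γ, t, hγc, hγi, by rw [hγ0, hc0], by rw [hγ1, hc1], ?_, ht0, htk, htmono, ?_, ?_⟩
  · refine hγim.trans ?_
    intro x hx
    obtain ⟨j, -, hj⟩ := hcim hx
    exact ⟨j, hj⟩
  · intro j h0 hjk hcon
    exact htnS j h0 hjk ⟨htIcc j (by omega), hcon⟩
  · intro j hj
    intro a ha b hb
    have hsub : {s ∈ Icc (t j) (t (j+1)) | γ s ∈ Δ.crossings} ⊆
        S ∩ Set.Icc (t j) (t (j+1)) := by
      intro s hs
      have hIcc : s ∈ Icc (0:ℝ) 1 :=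
        ⟨(htIcc j (by omega)).1.trans hs.1.1, hs.1.2.trans (htIcc (j+1) (by omega)).2⟩
      exact ⟨⟨hIcc, hs.2⟩, hs.1⟩
    exact htss j hj (hsub ha) (hsub hb)

lemma sdv_inl {e : G.E} {m : ℕ} (hm : m ≤ k) {v : G.V}
    (h : G.subdivVert k e m = Sum.inl v) : m = 0 ∨ m = k := by
  rcases classify hm with h0 | ⟨h1, h2⟩ | hkk
  · exact Or.inl h0
  · rw [sdv_mid e h1 h2] at h
    exact absurd h (by simp)
  · exact Or.inr hkk

end SubdivAux


/-- If the subdivision `G̃` of `G` (every edge subdivided `k - 1` times, `k ≥ 1`) has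
a `k`-good drawing with respect to `F̃`, then it has a `k`-good drawing with respect
to `F̃` in which, additionally, every edge is involved in at most one crossing. -/
theorem subdivision_good_drawing_simple_crossings (k : ℕ) (hk : 1 ≤ k) (G : MGraph)
    (F : Set G.E)
    (h : ∃ Δ : Drawing (G.subdivide k), Δ.IsGood k (G.subdivF k F)) :
    ∃ Δ : Drawing (G.subdivide k), Δ.IsGood k (G.subdivF k F) ∧
      ∀ e : (G.subdivide k).E, {x | Δ.IsCrossing x ∧ x ∈ Δ.arc e}.Subsingleton := by
  classical
  obtain ⟨Δ, hgood⟩ := h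
  obtain ⟨⟨hfin, hcard⟩, hFgood⟩ := hgood
  choose γ t hγc hγi hγ0 hγ1 hγim ht0 htk htmono htnc htsub using
    fun e => SubdivAux.exists_gamma hk Δ hfin hcard e
  -- basic facts about the cut parameters
  have htIcc : ∀ (e : G.E) (j : ℕ), j ≤ k → t e j ∈ Set.Icc (0:ℝ) 1 := by
    intro e j hj
    constructor
    · rcases Nat.eq_zero_or_pos j with rfl | h0
      · rw [ht0]
      · rw [← ht0 e]; exact le_of_lt (htmono e 0 j h0 hj)
    · rcases eq_or_lt_of_le hj with rfl | hlt
      · rw [htk]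
      · rw [← htk e]; exact le_of_lt (htmono e j k hlt le_rfl)
  have hd : ∀ (e : G.E) (i : Fin k), t e i.val < t e (i.val + 1) :=
    fun e i => htmono e i.val (i.val + 1) (by omega) i.isLt
  have hIoo : ∀ (f : G.E) (j : Fin (k-1)), 0 < t f (j.val + 1) ∧ t f (j.val + 1) < 1 := by
    intro f j
    have hj := j.isLt
    constructor
    · rw [← ht0 f]; exact htmono f 0 (j.val + 1) (by omega) (by omega)
    · rw [← htk f]; exact htmono f (j.val + 1) k (by omega) le_rfl
  -- the new drawing data
  set vp' : (G.subdivide k).V → ℝ × ℝ := fun v =>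
    match v with
    | Sum.inl a => Δ.vpos (Sum.inl a)
    | Sum.inr p => γ p.1 (t p.1 (p.2.val + 1)) with hvp'
  set par' : (G.subdivide k).E → ℝ → ℝ × ℝ :=
    fun p u => γ p.1 (t p.1 p.2.val + u * (t p.1 (p.2.val + 1) - t p.1 p.2.val)) with hpar'
  have hσmem : ∀ (e : G.E) (i : Fin k) (u : ℝ), u ∈ Set.Icc (0:ℝ) 1 →
      (t e i.val + u * (t e (i.val + 1) - t e i.val)) ∈
        Set.Icc (t e i.val) (t e (i.val + 1)) := by
    intro e i u hu
    have hdd := le_of_lt (sub_pos.mpr (hd e i))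
    constructor
    · nlinarith [mul_nonneg hu.1 hdd]
    · nlinarith [mul_le_of_le_one_left hdd hu.2]
  have hσmemo : ∀ (e : G.E) (i : Fin k) (u : ℝ), u ∈ Set.Ioo (0:ℝ) 1 →
      (t e i.val + u * (t e (i.val + 1) - t e i.val)) ∈
        Set.Ioo (t e i.val) (t e (i.val + 1)) := by
    intro e i u hu
    have hdd := sub_pos.mpr (hd e i)
    constructor
    · nlinarith [mul_pos hu.1 hdd]
    · nlinarith [mul_lt_of_lt_one_left hdd hu.2]
  have htsubIcc : ∀ (e : G.E) (i : Fin k),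
      Set.Icc (t e i.val) (t e (i.val + 1)) ⊆ Set.Icc (0:ℝ) 1 := by
    intro e i
    have hi := i.isLt
    exact Set.Icc_subset_Icc (htIcc e i.val (by omega)).1 (htIcc e (i.val + 1) (by omega)).2
  have HARC : ∀ (p : (G.subdivide k).E) (x : ℝ × ℝ), x ∈ par' p '' Set.Icc 0 1 →
      ∃ s, s ∈ Set.Icc (t p.1 p.2.val) (t p.1 (p.2.val + 1)) ∧ γ p.1 s = x := by
    rintro p x ⟨u, hu, rfl⟩
    exact ⟨_, hσmem p.1 p.2 u hu, rfl⟩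
  have HARCO : ∀ (p : (G.subdivide k).E) (x : ℝ × ℝ), x ∈ par' p '' Set.Ioo 0 1 →
      ∃ s, s ∈ Set.Ioo (t p.1 p.2.val) (t p.1 (p.2.val + 1)) ∧ γ p.1 s = x := by
    rintro p x ⟨u, hu, rfl⟩
    exact ⟨_, hσmemo p.1 p.2 u hu, rfl⟩
  have HIM : ∀ (p : (G.subdivide k).E) (x : ℝ × ℝ), x ∈ par' p '' Set.Icc 0 1 →
      x ∈ γ p.1 '' Set.Icc 0 1 := by
    intro p x hx
    obtain ⟨s, hs, hγs⟩ := HARC p x hx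
    exact ⟨s, htsubIcc p.1 p.2 hs, hγs⟩
  have himarc : ∀ (e : G.E) (x : ℝ × ℝ), x ∈ γ e '' Set.Icc 0 1 →
      ∃ j : Fin k, x ∈ Δ.arc (e, j) := fun e x hx => hγim e hx
  have HV01 : ∀ (e : G.E) (m : ℕ), m ≤ k → vp' (G.subdivVert k e m) = γ e (t e m) := by
    intro e m hm
    rcases (by omega : m = 0 ∨ (0 < m ∧ m < k) ∨ m = k) with rfl | ⟨h1, h2⟩ | rfl
    · rw [SubdivAux.sdv_zero]
      show Δ.vpos (Sum.inl _) = _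
      rw [← SubdivAux.sdv_zero (k := k), ← hγ0 e, ht0 e]
    · rw [SubdivAux.sdv_mid e h1 h2]
      show γ e (t e ((m - 1) + 1)) = γ e (t e m)
      congr 2
      omega
    · rw [SubdivAux.sdv_last hk]
      show Δ.vpos (Sum.inl _) = _
      rw [← SubdivAux.sdv_last hk, ← hγ1 e, htk e]
  have HKEY : ∀ (e f : G.E), e ≠ f → ∀ x, x ∈ γ e '' Set.Icc 0 1 →
      x ∈ γ f '' Set.Icc 0 1 → x ∉ Set.range Δ.vpos → x ∈ Δ.crossings := by
    intro e f hef x hxe hxf hnr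
    obtain ⟨j, hxj⟩ := himarc e x hxe
    obtain ⟨j', hxj'⟩ := himarc f x hxf
    exact ⟨hnr, (e, j), (f, j'), fun hcon => hef (congrArg Prod.fst hcon), hxj, hxj'⟩
  have HVX : ∀ (e f : G.E), e ≠ f → ∀ x, x ∈ γ e '' Set.Icc 0 1 →
      x ∈ γ f '' Set.Icc 0 1 → ∀ w, Δ.vpos w = x → x = γ e 0 ∨ x = γ e 1 := by
    intro e f hef x hxe hxf w hw
    obtain ⟨j, hxj⟩ := himarc e x hxe
    obtain ⟨j', hxj'⟩ := himarc f x hxf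
    obtain ⟨m, hm, hwm, -⟩ := SubdivAux.vertex_arc (Δ := Δ) (w := w) (hw ▸ hxj)
    obtain ⟨m', hm', hwm', -⟩ := SubdivAux.vertex_arc (Δ := Δ) (w := w) (hw ▸ hxj')
    rcases SubdivAux.sdv_cross hef hm hm' (hwm ▸ hwm' ▸ rfl) with rfl | rfl
    · left; rw [← hw, hwm, ← hγ0 e]
    · right; rw [← hw, hwm, ← hγ1 e]
  have HCR : ∀ (e f : G.E), e ≠ f → ∀ (x : ℝ × ℝ) (s : ℝ), s ∈ Set.Icc (0:ℝ) 1 →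
      γ e s = x → 0 < s → s < 1 → x ∈ γ f '' Set.Icc 0 1 → x ∈ Δ.crossings := by
    intro e f hef x s hs hγs hs0 hs1 hxf
    by_cases hnr : x ∈ Set.range Δ.vpos
    · obtain ⟨w, hw⟩ := hnr
      exfalso
      rcases HVX e f hef x ⟨s, hs, hγs⟩ hxf w hw with hx0 | hx1
      · have := hγi e hs ⟨le_refl _, zero_le_one⟩ (by rw [hγs, hx0])
        linarith
      · have := hγi e hs ⟨zero_le_one, le_refl _⟩ (by rw [hγs, hx1])
        linarith
    · exact HKEY e f hef x ⟨s, hs, hγs⟩ hxf hnr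
  have HTINJ : ∀ (e : G.E) (a b : ℕ), a ≤ k → b ≤ k → t e a = t e b → a = b := by
    intro e a b ha hb hab
    by_contra hne
    rcases lt_or_gt_of_ne hne with h | h
    · exact absurd hab (ne_of_lt (htmono e a b h hb))
    · exact absurd hab.symm (ne_of_lt (htmono e b a h ha))
  have HSAME : ∀ (e : G.E) (i i' : Fin k) (x : ℝ × ℝ), x ∈ par' (e, i) '' Set.Icc 0 1 →
      x ∈ par' (e, i') '' Set.Icc 0 1 → x ∉ Set.range vp' → i = i' := by
    intro e i i' x hx hx' hnr
    obtain ⟨s, hs, hγs⟩ := HARC (e, i) x hx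
    obtain ⟨s', hs', hγs'⟩ := HARC (e, i') x hx'
    have hss : s = s' := hγi e (htsubIcc e i hs) (htsubIcc e i' hs') (hγs.trans hγs'.symm)
    subst hss
    have key : ∀ (a b : Fin k), a.val < b.val → s ∈ Set.Icc (t e a.val) (t e (a.val + 1)) →
        s ∈ Set.Icc (t e b.val) (t e (b.val + 1)) → x = γ e s → False := by
      intro a b hab hsa hsb hxs
      have h1 : t e (a.val + 1) ≤ t e b.val := by
        rcases (by omega : a.val + 1 = b.val ∨ a.val + 1 < b.val) with hh | hh
        · rw [hh]
        · exact le_of_lt (htmono e (a.val + 1) b.val hh (by have := b.isLt; omega))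
      have hsval : s = t e b.val := le_antisymm (by linarith [hsa.2, hsb.1, hsb.2])
        hsb.1
      have hb1 : 1 ≤ b.val := by omega
      have hbk : b.val < k := b.isLt
      apply hnr
      refine ⟨Sum.inr (e, ⟨b.val - 1, by omega⟩), ?_⟩
      show γ e (t e ((b.val - 1) + 1)) = x
      rw [show (b.val - 1) + 1 = b.val by omega, ← hsval, hxs]
    by_contra hne
    have hvne : i.val ≠ i'.val := fun hcon => hne (Fin.ext hcon)
    rcases lt_or_gt_of_ne hvne with hlt | hlt
    · exact key i i' hlt hs hs' hγs.symm
    · exact key i' i hlt hs' hs hγs.symm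
  have HNRV : ∀ (e f : G.E), e ≠ f → ∀ (x : ℝ × ℝ), x ∈ γ e '' Set.Icc 0 1 →
      x ∈ γ f '' Set.Icc 0 1 → x ∉ Set.range vp' → x ∉ Set.range Δ.vpos := by
    intro e f hef x hxe hxf hnr hr
    obtain ⟨w, hw⟩ := hr
    match w, hw with
    | Sum.inl a, hw => exact hnr ⟨Sum.inl a, hw⟩
    | Sum.inr p, hw =>
      obtain ⟨j, hxj⟩ := himarc e x hxe
      obtain ⟨j', hxj'⟩ := himarc f x hxf
      obtain ⟨m, hm, hwm, -⟩ := SubdivAux.vertex_arc (Δ := Δ) (w := Sum.inr p) (hw ▸ hxj)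
      obtain ⟨m', hm', hwm', -⟩ := SubdivAux.vertex_arc (Δ := Δ) (w := Sum.inr p) (hw ▸ hxj')
      have h1 := (SubdivAux.sdv_inr hm hwm.symm).1
      have h2 := (SubdivAux.sdv_inr hm' hwm'.symm).1
      exact hef (h1 ▸ h2.symm ▸ rfl)
  have HCROSS : ∀ (x : ℝ × ℝ), x ∉ Set.range vp' →
      ∀ (p q : (G.subdivide k).E), p ≠ q → x ∈ par' p '' Set.Icc 0 1 →
        x ∈ par' q '' Set.Icc 0 1 → x ∈ Δ.crossings := by
    intro x hnr p q hpq hxp hxq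
    obtain ⟨e, i⟩ := p
    obtain ⟨f, i'⟩ := q
    by_cases hef : e = f
    · subst hef
      exact absurd (by rw [HSAME e i i' x hxp hxq hnr]) hpq
    · have hxe := HIM (e, i) x hxp
      have hxf := HIM (f, i') x hxq
      exact HKEY e f hef x hxe hxf (HNRV e f hef x hxe hxf hnr)
  -- the vertex map is injective
  have hIL : ∀ (a : G.V) (f : G.E) (j : Fin (k - 1)),
      Δ.vpos (Sum.inl a) ≠ γ f (t f (j.val + 1)) := by
    intro a f j hab
    have hj := j.isLt
    have hs0 := (hIoo f j).1
    have hs1 := (hIoo f j).2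
    have hIcc : t f (j.val + 1) ∈ Set.Icc (0:ℝ) 1 := htIcc f (j.val + 1) (by omega)
    obtain ⟨jj, hxj⟩ := himarc f _ ⟨t f (j.val + 1), hIcc, rfl⟩
    obtain ⟨m, hm, hwm, -⟩ :=
      SubdivAux.vertex_arc (Δ := Δ) (w := Sum.inl a) (by rw [hab]; exact hxj)
    rcases SubdivAux.sdv_inl hm hwm.symm with rfl | rfl
    · have : γ f 0 = γ f (t f (j.val + 1)) := by
        rw [hγ0 f, ← hwm, hab]
      have := hγi f ⟨le_refl _, zero_le_one⟩ hIcc this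
      linarith
    · have : γ f 1 = γ f (t f (j.val + 1)) := by
        rw [hγ1 f, ← hwm, hab]
      have := hγi f ⟨zero_le_one, le_refl _⟩ hIcc this
      linarith
  have hvinj : Function.Injective vp' := by
    intro a b hab
    match a, b, hab with
    | Sum.inl a, Sum.inl b, hab =>
      have : (Sum.inl a : (G.subdivide k).V) = Sum.inl b := Δ.vpos_inj hab
      exact this
    | Sum.inl a, Sum.inr p, hab => exact absurd hab (hIL a p.1 p.2)
    | Sum.inr p, Sum.inl a, hab => exact absurd hab.symm (hIL a p.1 p.2)
    | Sum.inr ⟨e, j⟩, Sum.inr ⟨f, j'⟩, hab =>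
      show (Sum.inr (e, j) : (G.subdivide k).V) = Sum.inr (f, j')
      have hje := (hIoo e j)
      have hjf := (hIoo f j')
      have hIe : t e (j.val + 1) ∈ Set.Icc (0:ℝ) 1 := htIcc e (j.val + 1) (by have := j.isLt; omega)
      have hIf : t f (j'.val + 1) ∈ Set.Icc (0:ℝ) 1 := htIcc f (j'.val + 1) (by have := j'.isLt; omega)
      by_cases hef : e = f
      · subst hef
        have hteq : t e (j.val + 1) = t e (j'.val + 1) := hγi e hIe hIf hab
        have hj := j.isLt
        have hj' := j'.isLt
        have := HTINJ e (j.val + 1) (j'.val + 1) (by omega) (by omega) hteq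
        have : j = j' := Fin.ext (by omega)
        rw [this]
      · exfalso
        have hcr : γ e (t e (j.val + 1)) ∈ Δ.crossings := by
          refine HCR e f hef _ (t e (j.val + 1)) hIe rfl hje.1 hje.2 ?_
          exact ⟨t f (j'.val + 1), hIf, hab.symm⟩
        have hj := j.isLt
        exact htnc e (j.val + 1) (by omega) (by omega) hcr
  -- assemble the new drawing
  refine ⟨⟨vp', par', ?_, ?_, ?_, hvinj, ?_, ?_, ?_⟩, ?_, ?_⟩
  · -- continuity
    intro p
    exact ((hγc p.1).comp (continuous_const.add (continuous_id.mul continuous_const))).continuousOn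
  · -- injectivity of parametrizations
    intro p u hu v hv huv
    have h1 := hγi p.1 (htsubIcc p.1 p.2 (hσmem p.1 p.2 u hu))
      (htsubIcc p.1 p.2 (hσmem p.1 p.2 v hv)) huv
    have h2 : u * (t p.1 (p.2.val + 1) - t p.1 p.2.val) = v * (t p.1 (p.2.val + 1) - t p.1 p.2.val) := by
      linarith
    exact mul_right_cancel₀ (ne_of_gt (sub_pos.mpr (hd p.1 p.2))) h2
  · -- endpoints
    intro p
    obtain ⟨e, i⟩ := p
    have hik := i.isLt
    refine ⟨G.subdivVert k e i.val, G.subdivVert k e (i.val + 1), rfl, ?_, ?_⟩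
    · show γ e (t e i.val + 0 * (t e (i.val + 1) - t e i.val)) = vp' (G.subdivVert k e i.val)
      rw [show t e i.val + 0 * (t e (i.val + 1) - t e i.val) = t e i.val by ring,
        HV01 e i.val (by omega)]
    · show γ e (t e i.val + 1 * (t e (i.val + 1) - t e i.val)) =
        vp' (G.subdivVert k e (i.val + 1))
      rw [show t e i.val + 1 * (t e (i.val + 1) - t e i.val) = t e (i.val + 1) by ring,
        HV01 e (i.val + 1) (by omega)]
  · -- arcs intersect in at most one interior point
    intro p q hpq
    obtain ⟨e, i⟩ := p
    obtain ⟨f, i'⟩ := q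
    by_cases hef : e = f
    · subst hef
      have hii : i ≠ i' := fun hcon => hpq (by rw [hcon])
      rintro x ⟨hx1, hx2⟩ y -
      exfalso
      obtain ⟨s, hs, hγs⟩ := HARCO (e, i) x hx1
      obtain ⟨s', hs', hγs'⟩ := HARCO (e, i') x hx2
      have hss : s = s' := hγi e (htsubIcc e i (Set.Ioo_subset_Icc_self hs))
        (htsubIcc e i' (Set.Ioo_subset_Icc_self hs')) (hγs.trans hγs'.symm)
      subst hss
      have hvne : i.val ≠ i'.val := fun hcon => hii (Fin.ext hcon)
      have hile : ∀ (a b : Fin k), a.val < b.val → t e (a.val + 1) ≤ t e b.val := by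
        intro a b hab
        rcases (by omega : a.val + 1 = b.val ∨ a.val + 1 < b.val) with hh | hh
        · rw [hh]
        · exact le_of_lt (htmono e (a.val + 1) b.val hh (by have := b.isLt; omega))
      rcases lt_or_gt_of_ne hvne with hlt | hlt
      · have := hile i i' hlt
        linarith [hs.2, hs'.1]
      · have := hile i' i hlt
        linarith [hs'.2, hs.1]
    · intro x hx y hy
      obtain ⟨sx, hsx, hγsx⟩ := HARCO (e, i) x hx.1
      obtain ⟨sy, hsy, hγsy⟩ := HARCO (e, i) y hy.1
      have hi := i.isLt
      have hi' := i'.isLt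
      have hIccx : sx ∈ Set.Icc (0:ℝ) 1 := htsubIcc e i (Set.Ioo_subset_Icc_self hsx)
      have hIccy : sy ∈ Set.Icc (0:ℝ) 1 := htsubIcc e i (Set.Ioo_subset_Icc_self hsy)
      have hx0 : (0:ℝ) < sx := lt_of_le_of_lt (htIcc e i.val (by omega)).1 hsx.1
      have hx1 : sx < 1 := lt_of_lt_of_le hsx.2 (htIcc e (i.val + 1) (by omega)).2
      have hy0 : (0:ℝ) < sy := lt_of_le_of_lt (htIcc e i.val (by omega)).1 hsy.1
      have hy1 : sy < 1 := lt_of_lt_of_le hsy.2 (htIcc e (i.val + 1) (by omega)).2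
      have hxf : x ∈ γ f '' Set.Icc 0 1 := HIM (f, i') x
        ((Set.image_mono Set.Ioo_subset_Icc_self) hx.2)
      have hyf : y ∈ γ f '' Set.Icc 0 1 := HIM (f, i') y
        ((Set.image_mono Set.Ioo_subset_Icc_self) hy.2)
      have hxc := HCR e f hef x sx hIccx hγsx hx0 hx1 hxf
      have hyc := HCR e f hef y sy hIccy hγsy hy0 hy1 hyf
      have := htsub e i.val hi ⟨Set.Ioo_subset_Icc_self hsx, by rw [hγsx]; exact hxc⟩
        ⟨Set.Ioo_subset_Icc_self hsy, by rw [hγsy]; exact hyc⟩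
      rw [← hγsx, ← hγsy, this]
  · -- vertices on arcs
    intro p w hw
    obtain ⟨e, i⟩ := p
    have hik := i.isLt
    obtain ⟨s, hs, hγs⟩ := HARC (e, i) _ hw
    have hsI : s ∈ Set.Icc (0:ℝ) 1 := htsubIcc e i hs
    have hmem : ∀ (m : ℕ), m ≤ k → w = G.subdivVert k e m → (m = i.val ∨ m = i.val + 1) →
        w ∈ (G.subdivide k).ends (e, i) := by
      intro m hm hwm hmor
      rw [SubdivAux.ends_subdiv]; apply Sym2.mem_iff.mpr
      rcases hmor with rfl | rfl
      · exact Or.inl hwm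
      · exact Or.inr hwm
    rcases w with a | ⟨f, j⟩
    · have hxe : Δ.vpos (Sum.inl a) ∈ γ e '' Set.Icc 0 1 := ⟨s, hsI, hγs⟩
      obtain ⟨jj, hxj⟩ := himarc e _ hxe
      obtain ⟨m, hm, hwm, -⟩ := SubdivAux.vertex_arc (Δ := Δ) (w := Sum.inl a) hxj
      rcases SubdivAux.sdv_inl hm hwm.symm with hm0 | hmk
      · rw [hm0] at hwm
        have hseq : γ e s = γ e 0 := by
          rw [hγs, hwm, HV01 e 0 (by omega), ht0 e]
        have hs0 : s = 0 := hγi e hsI ⟨le_refl _, zero_le_one⟩ hseq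
        have hti : t e i.val = 0 := le_antisymm (by rw [← hs0]; exact hs.1)
          (htIcc e i.val (by omega)).1
        have hi0 : i.val = 0 := HTINJ e i.val 0 (by omega) (by omega) (by rw [hti, ht0])
        exact hmem 0 (by omega) hwm (Or.inl hi0.symm)
      · rw [hmk] at hwm
        have hseq : γ e s = γ e 1 := by
          rw [hγs, hwm, HV01 e k le_rfl, htk e]
        have hs1 : s = 1 := hγi e hsI ⟨zero_le_one, le_refl _⟩ hseq
        have hti : t e (i.val + 1) = 1 := le_antisymm (htIcc e (i.val + 1) (by omega)).2
          (by rw [← hs1]; exact hs.2)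
        have hik' : i.val + 1 = k := HTINJ e (i.val + 1) k (by omega) le_rfl
          (by rw [hti, htk])
        exact hmem k le_rfl hwm (Or.inr hik'.symm)
    · have hj := j.isLt
      by_cases hef : e = f
      · subst hef
        have hteq : s = t e (j.val + 1) :=
          hγi e hsI (htIcc e (j.val + 1) (by omega)) hγs
        have hlow : i.val ≤ j.val + 1 := by
          by_contra hcon
          push_neg at hcon
          have := htmono e (j.val + 1) i.val hcon (by omega)
          rw [← hteq] at this
          linarith [hs.1]
        have hhigh : j.val + 1 ≤ i.val + 1 := by
          by_contra hcon
          push_neg at hcon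
          have := htmono e (i.val + 1) (j.val + 1) hcon (by omega)
          rw [← hteq] at this
          linarith [hs.2]
        have hwm : (Sum.inr (e, j) : (G.subdivide k).V) = G.subdivVert k e (j.val + 1) := by
          rw [SubdivAux.sdv_mid e (by omega) (by omega)]
          congr 1
        exact hmem (j.val + 1) (by omega) hwm (by omega)
      · exfalso
        have hfe : f ≠ e := fun hcon => hef hcon.symm
        have hcr : γ f (t f (j.val + 1)) ∈ Δ.crossings := by
          refine HCR f e hfe _ (t f (j.val + 1)) (htIcc f (j.val + 1) (by omega))
            rfl (hIoo f j).1 (hIoo f j).2 ?_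
          exact ⟨s, hsI, hγs⟩
        exact htnc f (j.val + 1) (by omega) (by omega) hcr
  · -- at most two arcs through a non-vertex point
    intro x hx p₁ p₂ p₃ h₁ h₂ h₃
    by_cases h12 : p₁.1 = p₂.1
    · left
      have := HSAME p₁.1 p₁.2 p₂.2 x h₁ (by rw [h12]; exact h₂) hx
      exact Prod.ext h12 this
    by_cases h13 : p₁.1 = p₃.1
    · right; left
      have := HSAME p₁.1 p₁.2 p₃.2 x h₁ (by rw [h13]; exact h₃) hx
      exact Prod.ext h13 this
    by_cases h23 : p₂.1 = p₃.1
    · right; right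
      have := HSAME p₂.1 p₂.2 p₃.2 x h₂ (by rw [h23]; exact h₃) hx
      exact Prod.ext h23 this
    exfalso
    have hx1 := HIM p₁ x h₁
    have hx2 := HIM p₂ x h₂
    have hx3 := HIM p₃ x h₃
    have hnr : x ∉ Set.range Δ.vpos := HNRV p₁.1 p₂.1 h12 x hx1 hx2 hx
    obtain ⟨j₁, hj₁⟩ := himarc p₁.1 x hx1
    obtain ⟨j₂, hj₂⟩ := himarc p₂.1 x hx2
    obtain ⟨j₃, hj₃⟩ := himarc p₃.1 x hx3
    rcases Δ.at_most_two x hnr (p₁.1, j₁) (p₂.1, j₂) (p₃.1, j₃) hj₁ hj₂ hj₃ with hc | hc | hc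
    · have hcc := congrArg (fun z : (G.subdivide k).E => z.1) hc
      exact h12 hcc
    · have hcc := congrArg (fun z : (G.subdivide k).E => z.1) hc
      exact h13 hcc
    · have hcc := congrArg (fun z : (G.subdivide k).E => z.1) hc
      exact h23 hcc
  · -- the new drawing is good
    have hcr : {x : ℝ × ℝ | x ∉ Set.range vp' ∧ ∃ p q : (G.subdivide k).E, p ≠ q ∧
        x ∈ par' p '' Set.Icc 0 1 ∧ x ∈ par' q '' Set.Icc 0 1} ⊆ Δ.crossings := by
      rintro x ⟨hnr, p, q, hpq, hxp, hxq⟩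
      exact HCROSS x hnr p q hpq hxp hxq
    refine ⟨⟨hfin.subset hcr, le_trans (Set.ncard_le_ncard hcr hfin) hcard⟩, ?_⟩
    intro p hp hinv
    obtain ⟨x, hxc, hxa⟩ := hinv
    have hxcr : x ∈ Δ.crossings := hcr hxc
    obtain ⟨j, hxj⟩ := himarc p.1 x (HIM p x hxa)
    exact hFgood (p.1, j) hp ⟨x, hxcr, hxj⟩
  · -- every edge involved in at most one crossing
    have hcr : {x : ℝ × ℝ | x ∉ Set.range vp' ∧ ∃ p q : (G.subdivide k).E, p ≠ q ∧
        x ∈ par' p '' Set.Icc 0 1 ∧ x ∈ par' q '' Set.Icc 0 1} ⊆ Δ.crossings := by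
      rintro x ⟨hnr, p, q, hpq, hxp, hxq⟩
      exact HCROSS x hnr p q hpq hxp hxq
    intro p x hx y hy
    obtain ⟨hxc, hxa⟩ := hx
    obtain ⟨hyc, hya⟩ := hy
    obtain ⟨sx, hsx, hγsx⟩ := HARC p x hxa
    obtain ⟨sy, hsy, hγsy⟩ := HARC p y hya
    have hi := p.2.isLt
    have hxcr : x ∈ Δ.crossings := hcr hxc
    have hycr : y ∈ Δ.crossings := hcr hyc
    have := htsub p.1 p.2.val hi ⟨hsx, by rw [hγsx]; exact hxcr⟩
      ⟨hsy, by rw [hγsy]; exact hycr⟩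
    rw [← hγsx, ← hγsy, this]
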